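/- arXiv:1103.1934 — 7 statements merged into one kernel-verified Lean document; each statement's English description precedes it below -/
import Mathlib

section
/- Let F be a 2k-uniform 2-cancellative family of subsets of [n]. Then |F| ≤ binomial(n,k) / ((1/2)·binomial(2k,k)), i.e., binomial(2k,k)·|F| ≤ 2·binomial(n,k). -/
/-- A family is 2-cancellative: for all four distinct members `A1, A2, B, C`,
`A1 ∪ A2 ∪ B = A1 ∪ A2 ∪ C` implies `B = C`. -/
def TwoCancellative (F : Finset (Finset ℕ)) : Prop :=
  ∀ A1 A2 B C : Finset ℕ, A1 ∈ F → A2 ∈ F → B ∈ F → C ∈ F →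
    A1 ≠ A2 → A1 ≠ B → A1 ≠ C → A2 ≠ B → A2 ≠ C →
    A1 ∪ A2 ∪ B = A1 ∪ A2 ∪ C → B = C

namespace TwoCancAux

/-- The set of ordered splits of members of `F` into two halves of size `k`. -/
def Pairs (k : ℕ) (F : Finset (Finset ℕ)) : Finset (Finset ℕ × Finset ℕ) :=
  F.biUnion fun A => (A.powersetCard k).image fun S => (S, A \ S)

lemma mem_pairs {k : ℕ} {F : Finset (Finset ℕ)} (hunif : ∀ A ∈ F, A.card = 2 * k)
    {S T : Finset ℕ} :
    (S, T) ∈ Pairs k F ↔ S.card = k ∧ T.card = k ∧ S ∩ T = ∅ ∧ S ∪ T ∈ F := by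
  constructor
  · intro h
    simp only [Pairs, Finset.mem_biUnion, Finset.mem_image] at h
    obtain ⟨A, hA, S', hS', hEq⟩ := h
    obtain ⟨hsubA, hcard⟩ := Finset.mem_powersetCard.1 hS'
    obtain ⟨h1, h2⟩ := Prod.mk.injEq .. ▸ hEq
    subst h1; subst h2
    refine ⟨hcard, ?_, Finset.inter_sdiff_self _ _, ?_⟩
    · rw [Finset.card_sdiff_of_subset hsubA, hunif A hA, hcard]; omega
    · rw [Finset.union_sdiff_of_subset hsubA]; exact hA
  · rintro ⟨hS, hT, hd, hU⟩
    simp only [Pairs, Finset.mem_biUnion, Finset.mem_image]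
    refine ⟨S ∪ T, hU, S, Finset.mem_powersetCard.2 ⟨Finset.subset_union_left, hS⟩, ?_⟩
    rw [Finset.union_sdiff_cancel_left (Finset.disjoint_iff_inter_eq_empty.2 hd)]

lemma pairs_symm {k : ℕ} {F : Finset (Finset ℕ)} (hunif : ∀ A ∈ F, A.card = 2 * k)
    {S T : Finset ℕ} (h : (S, T) ∈ Pairs k F) : (T, S) ∈ Pairs k F := by
  rw [mem_pairs hunif] at h ⊢
  exact ⟨h.2.1, h.1, by rw [Finset.inter_comm]; exact h.2.2.1,
    by rw [Finset.union_comm]; exact h.2.2.2⟩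

lemma card_pairs {k : ℕ} {F : Finset (Finset ℕ)} (hunif : ∀ A ∈ F, A.card = 2 * k) :
    (Pairs k F).card = (2 * k).choose k * F.card := by
  rw [Pairs, Finset.card_biUnion]
  · rw [Finset.sum_congr rfl (g := fun _ => (2*k).choose k) (fun A hA => ?_),
      Finset.sum_const, smul_eq_mul, mul_comm]
    rw [Finset.card_image_of_injective _ (fun a b h => (Prod.ext_iff.1 h).1),
      Finset.card_powersetCard, hunif A hA]
  · intro A hA B hB hAB
    rw [Function.onFun, Finset.disjoint_left]
    rintro p hp1 hp2
    simp only [Finset.mem_image] at hp1 hp2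
    obtain ⟨S, hS, rfl⟩ := hp1
    obtain ⟨S', hS', hEq⟩ := hp2
    injection hEq with h1 h2
    apply hAB
    have hsA : S ⊆ A := (Finset.mem_powersetCard.1 hS).1
    have hsB : S' ⊆ B := (Finset.mem_powersetCard.1 hS').1
    calc A = S ∪ A \ S := (Finset.union_sdiff_of_subset hsA).symm
    _ = S' ∪ B \ S' := by rw [h1] at h2 ⊢; rw [← h2]
    _ = B := Finset.union_sdiff_of_subset hsB

/-- Key lemma: if `|F| ≥ 4`, any symmetric subset of `Pairs k F` has at most twice as many
elements as its set of first coordinates. -/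
lemma key (k : ℕ) (hk : 1 ≤ k) (F : Finset (Finset ℕ))
    (hunif : ∀ A ∈ F, A.card = 2 * k) (hcanc : TwoCancellative F) (hF4 : 4 ≤ F.card) :
    ∀ (m : ℕ) (P' : Finset (Finset ℕ × Finset ℕ)), P'.card = m →
      P' ⊆ Pairs k F → (∀ p ∈ P', (p.2, p.1) ∈ P') →
      P'.card ≤ 2 * (P'.image Prod.fst).card := by
  intro m
  induction m using Nat.strong_induction_on with
  | _ m ih =>
  intro P' hcardm hsubP hsym
  rcases Finset.eq_empty_or_nonempty P' with rfl | ⟨p0, hp0⟩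
  · simp
  by_cases hdeg1 : ∃ p ∈ P', (P'.filter fun q => q.1 = p.1).card = 1
  · -- there is a vertex of degree one: remove its edge and induct
    obtain ⟨⟨S, T⟩, hp, hone⟩ := hdeg1
    simp only at hone
    have hfacts := (mem_pairs hunif).1 (hsubP hp)
    have hST : S ≠ T := by
      intro h
      subst h
      have h0 : S = ∅ := by have := hfacts.2.2.1; rwa [Finset.inter_self] at this
      have h1 : S.card = k := hfacts.1
      rw [h0] at h1
      simp at h1
      omega
    have huniq : ∀ q ∈ P', q.1 = S → q = (S, T) := by
      intro q hq hq1
      have h1 : q ∈ P'.filter fun q => q.1 = S := Finset.mem_filter.2 ⟨hq, hq1⟩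
      have h2 : (S, T) ∈ P'.filter fun q => q.1 = S := Finset.mem_filter.2 ⟨hp, rfl⟩
      obtain ⟨a, ha⟩ := Finset.card_eq_one.1 hone
      rw [ha, Finset.mem_singleton] at h1 h2
      rw [h1, h2]
    have hTS : (T, S) ∈ P' := hsym _ hp
    have hne : ((S, T) : Finset ℕ × Finset ℕ) ≠ (T, S) := by
      intro h; exact hST (Prod.ext_iff.1 h).1
    set D : Finset (Finset ℕ × Finset ℕ) := {(S, T), (T, S)} with hD
    have hDsub : D ⊆ P' := by
      intro q hq
      rcases Finset.mem_insert.1 hq with rfl | hq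
      · exact hp
      · rw [Finset.mem_singleton.1 hq]; exact hTS
    have hDcard : D.card = 2 := Finset.card_pair hne
    set P'' := P' \ D with hP''
    have hcard'' : P''.card = m - 2 := by
      rw [hP'', Finset.card_sdiff_of_subset hDsub, hDcard, hcardm]
    have hm2 : 2 ≤ m := by
      rw [← hcardm, ← hDcard]; exact Finset.card_le_card hDsub
    have hsub'' : P'' ⊆ Pairs k F := (Finset.sdiff_subset).trans hsubP
    have hsym'' : ∀ p ∈ P'', (p.2, p.1) ∈ P'' := by
      rintro ⟨a, b⟩ hq
      obtain ⟨hq1, hq2⟩ := Finset.mem_sdiff.1 hq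
      refine Finset.mem_sdiff.2 ⟨hsym _ hq1, ?_⟩
      intro hmem
      apply hq2
      rcases Finset.mem_insert.1 hmem with h | h
      · obtain ⟨h1, h2⟩ := Prod.ext_iff.1 h
        simp only at h1 h2
        subst h1; subst h2
        exact Finset.mem_insert_of_mem (Finset.mem_singleton_self _)
      · obtain ⟨h1, h2⟩ := Prod.ext_iff.1 (Finset.mem_singleton.1 h)
        simp only at h1 h2
        subst h1; subst h2
        exact Finset.mem_insert_self _ _
    have hIH := ih (m - 2) (by omega) P'' hcard'' hsub'' hsym''
    have himg : P''.image Prod.fst ⊆ (P'.image Prod.fst).erase S := by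
      intro x hx
      obtain ⟨q, hq, rfl⟩ := Finset.mem_image.1 hx
      obtain ⟨hq1, hq2⟩ := Finset.mem_sdiff.1 hq
      refine Finset.mem_erase.2 ⟨?_, Finset.mem_image_of_mem _ hq1⟩
      intro h
      apply hq2
      rw [huniq q hq1 h]
      exact Finset.mem_insert_self _ _
    have hSmem : S ∈ P'.image Prod.fst := Finset.mem_image_of_mem _ hp
    have h1 : 1 ≤ (P'.image Prod.fst).card := Finset.card_pos.2 ⟨S, hSmem⟩
    have h2 : (P''.image Prod.fst).card ≤ (P'.image Prod.fst).card - 1 := by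
      calc (P''.image Prod.fst).card ≤ ((P'.image Prod.fst).erase S).card :=
        Finset.card_le_card himg
      _ = (P'.image Prod.fst).card - 1 := Finset.card_erase_of_mem hSmem
    omega
  · -- all degrees at least 2: derive a contradiction
    exfalso
    push_neg at hdeg1
    have hdeg2 : ∀ p ∈ P', 1 < (P'.filter fun q => q.1 = p.1).card := by
      intro p hp
      have h1 : 0 < (P'.filter fun q => q.1 = p.1).card :=
        Finset.card_pos.2 ⟨p, Finset.mem_filter.2 ⟨hp, rfl⟩⟩
      have := hdeg1 p hp
      omega
    -- pick a vertex S with two distinct partners T1 ≠ T2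
    obtain ⟨a, ha, b, hb, hab⟩ := Finset.one_lt_card.1 (hdeg2 p0 hp0)
    obtain ⟨ha1, ha2⟩ := Finset.mem_filter.1 ha
    obtain ⟨hb1, hb2⟩ := Finset.mem_filter.1 hb
    set S := p0.1 with hSdef
    set T1 := a.2 with hT1def
    set T2 := b.2 with hT2def
    have haeq : a = (S, T1) := by rw [← ha2]
    have hbeq : b = (S, T2) := by rw [← hb2]
    have hT12 : T1 ≠ T2 := by
      intro h; apply hab; rw [haeq, hbeq, h]
    have hST1 : (S, T1) ∈ P' := haeq ▸ ha1
    have hST2 : (S, T2) ∈ P' := hbeq ▸ hb1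
    -- partners of T1, T2 other than S
    have hpartner : ∀ T : Finset ℕ, (S, T) ∈ P' → ∃ U, (T, U) ∈ P' ∧ U ≠ S := by
      intro T hSTmem
      have hTS : (T, S) ∈ P' := hsym _ hSTmem
      obtain ⟨c, hc, hcne⟩ :=
        Finset.exists_mem_ne (hdeg2 (T, S) hTS) (T, S)
      obtain ⟨hc1, hc2⟩ := Finset.mem_filter.1 hc
      have hc2' : c.1 = T := hc2
      refine ⟨c.2, ?_, ?_⟩
      · have : c = (T, c.2) := by rw [← hc2']
        rwa [this] at hc1
      · intro h
        exact hcne (Prod.ext_iff.2 ⟨hc2', h⟩)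
    obtain ⟨U1, hT1U1, hU1S⟩ := hpartner T1 hST1
    obtain ⟨U2, hT2U2, hU2S⟩ := hpartner T2 hST2
    -- extract set-theoretic facts
    obtain ⟨hcS, hcT1, hdST1, hMF1⟩ := (mem_pairs hunif).1 (hsubP hST1)
    obtain ⟨-, hcT2, hdST2, hMF2⟩ := (mem_pairs hunif).1 (hsubP hST2)
    obtain ⟨-, hcU1, hdT1U1, hNF1⟩ := (mem_pairs hunif).1 (hsubP hT1U1)
    obtain ⟨-, hcU2, hdT2U2, hNF2⟩ := (mem_pairs hunif).1 (hsubP hT2U2)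
    set M1 := S ∪ T1 with hM1
    set M2 := S ∪ T2 with hM2
    set N1 := T1 ∪ U1 with hN1
    set N2 := T2 ∪ U2 with hN2
    have hdisjST1 : Disjoint S T1 := Finset.disjoint_iff_inter_eq_empty.2 hdST1
    have hdisjST2 : Disjoint S T2 := Finset.disjoint_iff_inter_eq_empty.2 hdST2
    have hM12 : M1 ≠ M2 := by
      intro h
      apply hT12
      calc T1 = M1 \ S := (Finset.union_sdiff_cancel_left hdisjST1).symm
      _ = M2 \ S := by rw [h]
      _ = T2 := Finset.union_sdiff_cancel_left hdisjST2
    -- N_i ≠ M_i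
    have hNM_same : ∀ T U : Finset ℕ, T ∩ U = ∅ → U.card = k → U ≠ S → T ∪ U ≠ S ∪ T := by
      intro T U hdTU hcU hUS h
      apply hUS
      have hUsub : U ⊆ S := by
        intro x hx
        have hx2 : x ∈ S ∪ T := by rw [← h]; exact Finset.mem_union_right _ hx
        rcases Finset.mem_union.1 hx2 with h' | h'
        · exact h'
        · exact absurd (Finset.mem_inter.2 ⟨h', hx⟩) (by rw [hdTU]; simp)
      exact Finset.eq_of_subset_of_card_le hUsub (by rw [hcU, hcS])
    have hN1M1 : N1 ≠ M1 := hNM_same T1 U1 hdT1U1 hcU1 hU1S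
    have hN2M2 : N2 ≠ M2 := hNM_same T2 U2 hdT2U2 hcU2 hU2S
    -- N_i ≠ M_j for i ≠ j
    have hNM_diff : ∀ T T' U : Finset ℕ, S ∩ T = ∅ → S ∩ T' = ∅ → T.card = k → T'.card = k →
        T ≠ T' → T ∪ U ≠ S ∪ T' := by
      intro T T' U hdT hdT' hcT hcT' hTT' h
      apply hTT'
      have hTsub : T ⊆ T' := by
        intro x hx
        have hx2 : x ∈ S ∪ T' := by rw [← h]; exact Finset.mem_union_left _ hx
        rcases Finset.mem_union.1 hx2 with h' | h'
        · exact absurd (Finset.mem_inter.2 ⟨h', hx⟩) (by rw [hdT]; simp)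
        · exact h'
      exact Finset.eq_of_subset_of_card_le hTsub (by rw [hcT, hcT'])
    have hN1M2 : N1 ≠ M2 := hNM_diff T1 T2 U1 hdST1 hdST2 hcT1 hcT2 hT12
    have hN2M1 : N2 ≠ M1 := hNM_diff T2 T1 U2 hdST2 hdST1 hcT2 hcT1 hT12.symm
    have hT1N1 : T1 ⊆ N1 := Finset.subset_union_left
    have hT2N2 : T2 ⊆ N2 := Finset.subset_union_left
    by_cases hNN : N1 = N2
    · -- both spare edges have the same member N1: use any fourth member
      have hT2N1 : T2 ⊆ N1 := hNN ▸ hT2N2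
      have hDcard : ({N1, M1, M2} : Finset (Finset ℕ)).card ≤ 3 := by
        apply le_trans (Finset.card_insert_le _ _)
        apply Nat.succ_le_succ
        exact le_trans (Finset.card_insert_le _ _) (by simp)
      have hnonempty : (F \ {N1, M1, M2}).Nonempty := by
        rw [← Finset.card_pos]
        have := Finset.card_le_card_sdiff_add_card (s := F) (t := {N1, M1, M2})
        omega
      obtain ⟨A2, hA2⟩ := hnonempty
      obtain ⟨hA2F, hA2n⟩ := Finset.mem_sdiff.1 hA2
      simp only [Finset.mem_insert, Finset.mem_singleton, not_or] at hA2n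
      obtain ⟨hA2N1, hA2M1, hA2M2⟩ := hA2n
      apply hM12
      apply hcanc N1 A2 M1 M2 hNF1 hA2F hMF1 hMF2 (Ne.symm hA2N1) hN1M1 hN1M2
        hA2M1 hA2M2
      ext x
      simp only [Finset.mem_union, hM1, hM2]
      constructor
      · rintro ((h | h) | (h | h))
        · exact Or.inl (Or.inl h)
        · exact Or.inl (Or.inr h)
        · exact Or.inr (Or.inl h)
        · exact Or.inl (Or.inl (hT1N1 h))
      · rintro ((h | h) | (h | h))
        · exact Or.inl (Or.inl h)
        · exact Or.inl (Or.inr h)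
        · exact Or.inr (Or.inl h)
        · exact Or.inl (Or.inl (hT2N1 h))
    · -- the two spare members are distinct
      apply hM12
      apply hcanc N1 N2 M1 M2 hNF1 hNF2 hMF1 hMF2 hNN hN1M1 hN1M2 hN2M1 hN2M2
      ext x
      simp only [Finset.mem_union, hM1, hM2]
      constructor
      · rintro ((h | h) | (h | h))
        · exact Or.inl (Or.inl h)
        · exact Or.inl (Or.inr h)
        · exact Or.inr (Or.inl h)
        · exact Or.inl (Or.inl (hT1N1 h))
      · rintro ((h | h) | (h | h))
        · exact Or.inl (Or.inl h)
        · exact Or.inl (Or.inr h)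
        · exact Or.inr (Or.inl h)
        · exact Or.inl (Or.inr (hT2N2 h))

end TwoCancAux

open TwoCancAux in
/-- a `2k`-uniform 2-cancellative family on `[n]` satisfies
`binom(2k,k) * |F| ≤ 2 * binom(n,k)`, i.e. `|F| ≤ binom(n,k)/((1/2) binom(2k,k))`. -/
theorem card_le_of_two_cancellative_uniform (n k : ℕ) (F : Finset (Finset ℕ))
    (hsub : ∀ A ∈ F, A ⊆ Finset.range n) (hunif : ∀ A ∈ F, A.card = 2 * k)
    (hcanc : TwoCancellative F) :
    (2 * k).choose k * F.card ≤ 2 * n.choose k := by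
  rcases Nat.eq_zero_or_pos k with rfl | hk
  · -- k = 0 : every member is empty, so |F| ≤ 1
    have hFsub : F ⊆ {∅} := by
      intro A hA
      rw [Finset.mem_singleton]
      exact Finset.card_eq_zero.1 (by rw [hunif A hA])
    have hcard : F.card ≤ 1 := by
      calc F.card ≤ ({∅} : Finset (Finset ℕ)).card := Finset.card_le_card hFsub
      _ = 1 := Finset.card_singleton _
    simp only [Nat.mul_zero, Nat.choose_zero_right, Nat.choose_self, one_mul]
    omega
  rcases Finset.eq_empty_or_nonempty F with rfl | ⟨A0, hA0⟩
  · simp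
  have h2kn : 2 * k ≤ n := by
    have h1 : A0.card ≤ (Finset.range n).card := Finset.card_le_card (hsub A0 hA0)
    rwa [hunif A0 hA0, Finset.card_range] at h1
  by_cases hF4 : 4 ≤ F.card
  · -- main case
    have hkey := key k hk F hunif hcanc hF4 (Pairs k F).card (Pairs k F) rfl
      (Finset.Subset.refl _) (fun p hp => by
        obtain ⟨a, b⟩ := p
        exact pairs_symm hunif hp)
    have himg : (Pairs k F).image Prod.fst ⊆ (Finset.range n).powersetCard k := by
      intro S hS
      obtain ⟨⟨S', T⟩, hp, rfl⟩ := Finset.mem_image.1 hS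
      obtain ⟨hcS, -, -, hUF⟩ := (mem_pairs hunif).1 hp
      refine Finset.mem_powersetCard.2 ⟨?_, hcS⟩
      exact Finset.Subset.trans Finset.subset_union_left (hsub _ hUF)
    have hpow : ((Finset.range n).powersetCard k).card = n.choose k := by
      rw [Finset.card_powersetCard, Finset.card_range]
    calc (2 * k).choose k * F.card = (Pairs k F).card := (card_pairs hunif).symm
    _ ≤ 2 * ((Pairs k F).image Prod.fst).card := hkey
    _ ≤ 2 * ((Finset.range n).powersetCard k).card :=
        Nat.mul_le_mul_left _ (Finset.card_le_card himg)
    _ = 2 * n.choose k := by rw [hpow]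
  · -- small family: |F| ≤ 3
    push_neg at hF4
    by_cases hF2 : F.card ≤ 2
    · calc (2 * k).choose k * F.card ≤ (2 * k).choose k * 2 :=
        Nat.mul_le_mul_left _ hF2
      _ = 2 * (2 * k).choose k := by ring
      _ ≤ 2 * n.choose k := Nat.mul_le_mul_left _ (Nat.choose_le_choose k h2kn)
    · -- |F| = 3 : then n ≥ 2k + 1
      push_neg at hF2
      have hF3 : F.card = 3 := by omega
      have hn : 2 * k + 1 ≤ n := by
        by_contra hc
        push_neg at hc
        have hn2k : n = 2 * k := by omega
        obtain ⟨A, hA, B, hB, hAB⟩ := Finset.one_lt_card.1 (by omega : 1 < F.card)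
        have hAeq : A = Finset.range n :=
          Finset.eq_of_subset_of_card_le (hsub A hA)
            (by rw [Finset.card_range, hunif A hA, hn2k])
        have hBeq : B = Finset.range n :=
          Finset.eq_of_subset_of_card_le (hsub B hB)
            (by rw [Finset.card_range, hunif B hB, hn2k])
        exact hAB (hAeq.trans hBeq.symm)
      obtain ⟨j, rfl⟩ : ∃ j, k = j + 1 := ⟨k - 1, by omega⟩
      set C := (2 * (j + 1)).choose (j + 1) with hC
      set Cm := (2 * (j + 1)).choose j with hCm
      have hid : C * (j + 1) = Cm * (j + 2) := by
        have := Nat.choose_succ_right_eq (2 * (j + 1)) j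
        rw [← hC, ← hCm] at this
        rw [this]
        congr 1
        omega
      have hCle : C ≤ 2 * Cm := by
        have h1 : C * (j + 1) ≤ (2 * Cm) * (j + 1) := by
          rw [hid]
          have : j + 2 ≤ 2 * (j + 1) := by omega
          calc Cm * (j + 2) ≤ Cm * (2 * (j + 1)) := Nat.mul_le_mul_left _ this
          _ = 2 * Cm * (j + 1) := by ring
        exact Nat.le_of_mul_le_mul_right h1 (by omega)
      have hpascal : (2 * (j + 1) + 1).choose (j + 1) = Cm + C := by
        rw [Nat.choose_succ_succ]
      have hmono : (2 * (j + 1) + 1).choose (j + 1) ≤ n.choose (j + 1) :=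
        Nat.choose_le_choose _ hn
      rw [hF3]
      omega
end

section
/- Let F be a (2k+1)-uniform 2-cancellative family of subsets of [n]. Then |F| ≤ binomial(n+1,k+1) / ((1/2)·binomial(2k+2,k+1)). -/
private lemma union_union_eq_of_sdiffs {U A B : Finset ℕ} (h1 : A \ B ⊆ U) (h2 : B \ A ⊆ U) :
    U ∪ A = U ∪ B := by
  ext x
  simp only [Finset.mem_union]
  constructor
  · rintro (h | h)
    · exact Or.inl h
    · by_cases hb : x ∈ B
      · exact Or.inr hb
      · exact Or.inl (h1 (Finset.mem_sdiff.2 ⟨h, hb⟩))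
  · rintro (h | h)
    · exact Or.inl h
    · by_cases ha : x ∈ A
      · exact Or.inr ha
      · exact Or.inl (h2 (Finset.mem_sdiff.2 ⟨h, ha⟩))

/-- `A` is the "primary" cover of `S` in `F`: it has minimal encoding among covers. -/
private def Prim (F : Finset (Finset ℕ)) (A S : Finset ℕ) : Prop :=
  ∀ A' ∈ F, S ⊆ A' → Encodable.encode A ≤ Encodable.encode A'

open Classical in
private noncomputable def phi (F : Finset (Finset ℕ)) (n : ℕ)
    (p : Σ _ : Finset ℕ, Finset ℕ) : Finset ℕ :=
  if Prim F p.1 p.2 then p.2 else insert n (p.1 \ p.2)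

private lemma choose_two_mul_succ (k : ℕ) :
    (2 * k + 2).choose (k + 1) = 2 * (2 * k + 1).choose (k + 1) := by
  have h1 : (2 * k + 1).choose k = (2 * k + 1).choose (k + 1) := by
    have h := Nat.choose_symm (show k + 1 ≤ 2 * k + 1 by omega)
    have h2 : 2 * k + 1 - (k + 1) = k := by omega
    rw [h2] at h
    exact h
  have h3 : (2 * k + 1 + 1).choose (k + 1) = (2 * k + 1).choose k + (2 * k + 1).choose (k + 1) :=
    Nat.choose_succ_succ _ _
  have h4 : 2 * k + 2 = 2 * k + 1 + 1 := by omega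
  rw [h4, h3, h1]
  ring

private lemma key_injection (n k : ℕ) (F : Finset (Finset ℕ))
    (hsub : ∀ A ∈ F, A ⊆ Finset.range n) (hunif : ∀ A ∈ F, A.card = 2 * k + 1)
    (hcanc : TwoCancellative F) (hF4 : 4 ≤ F.card) :
    F.card * (2 * k + 1).choose (k + 1) ≤ (n + 1).choose (k + 1) := by
  classical
  have hnA : ∀ A ∈ F, n ∉ A := by
    intro A hA h
    have := Finset.mem_range.1 (hsub A hA h)
    omega
  set D : Finset (Σ _ : Finset ℕ, Finset ℕ) := F.sigma (fun A => A.powersetCard (k + 1)) with hD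
  set T : Finset (Finset ℕ) := (Finset.range (n + 1)).powersetCard (k + 1) with hT
  have hmaps : ∀ p ∈ D, phi F n p ∈ T := by
    rintro ⟨A, S⟩ hp
    rw [hD, Finset.mem_sigma] at hp
    obtain ⟨hAF, hS⟩ := hp
    rw [Finset.mem_powersetCard] at hS
    obtain ⟨hSA, hScard⟩ := hS
    rw [hT, Finset.mem_powersetCard]
    by_cases hprim : Prim F A S
    · rw [show phi F n ⟨A, S⟩ = S by simp [phi, if_pos hprim]]
      refine ⟨hSA.trans ((hsub A hAF).trans (Finset.range_subset_range.2 (by omega))), hScard⟩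
    · rw [show phi F n ⟨A, S⟩ = insert n (A \ S) by simp [phi, if_neg hprim]]
      have hnAS : n ∉ A \ S := fun h => hnA A hAF (Finset.mem_sdiff.1 h).1
      constructor
      · intro x hx
        rcases Finset.mem_insert.1 hx with h | h
        · subst h; exact Finset.mem_range.2 (by omega)
        · exact Finset.range_subset_range.2 (by omega) (hsub A hAF (Finset.mem_sdiff.1 h).1)
      · rw [Finset.card_insert_of_notMem hnAS, Finset.card_sdiff_of_subset hSA, hunif A hAF, hScard]
        omega
  have hinj : Set.InjOn (phi F n) ↑D := by
    rintro ⟨A, S⟩ hp ⟨A', S'⟩ hq heq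
    rw [Finset.mem_coe, hD, Finset.mem_sigma, Finset.mem_powersetCard] at hp hq
    obtain ⟨hAF, hSA, hScard⟩ := hp
    obtain ⟨hA'F, hS'A', hS'card⟩ := hq
    simp only [phi] at heq
    by_cases h1 : Prim F A S <;> by_cases h2 : Prim F A' S'
    · rw [if_pos h1, if_pos h2] at heq
      subst heq
      have hAA' : A = A' :=
        Encodable.encode_injective (le_antisymm (h1 A' hA'F hS'A') (h2 A hAF hSA))
      subst hAA'
      rfl
    · rw [if_pos h1, if_neg h2] at heq
      exfalso
      have : n ∈ S := heq ▸ Finset.mem_insert_self n _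
      exact hnA A hAF (hSA this)
    · rw [if_neg h1, if_pos h2] at heq
      exfalso
      have : n ∈ S' := heq.symm ▸ Finset.mem_insert_self n _
      exact hnA A' hA'F (hS'A' this)
    · rw [if_neg h1, if_neg h2] at heq
      have h1n : n ∉ A \ S := fun h => hnA A hAF (Finset.mem_sdiff.1 h).1
      have h2n : n ∉ A' \ S' := fun h => hnA A' hA'F (Finset.mem_sdiff.1 h).1
      have hTeq : A \ S = A' \ S' := by
        rw [← Finset.erase_insert h1n, ← Finset.erase_insert h2n, heq]
      by_cases hAA' : A = A'
      · subst hAA'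
        have hSS' : S = S' := by
          have e1 : A \ (A \ S) = S := Finset.sdiff_sdiff_eq_self hSA
          have e2 : A \ (A \ S') = S' := Finset.sdiff_sdiff_eq_self hS'A'
          rw [← e1, ← e2, hTeq]
        subst hSS'
        rfl
      · exfalso
        simp only [Prim, not_forall] at h1 h2
        push_neg at h1 h2
        obtain ⟨B, hBF, hSB, hBlt⟩ := h1
        obtain ⟨C, hCF, hS'C, hClt⟩ := h2
        have hBA : B ≠ A := by
          intro h; subst h; exact lt_irrefl _ hBlt
        have hCA' : C ≠ A' := by
          intro h; subst h; exact lt_irrefl _ hClt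
        have hAsub : A \ A' ⊆ S := by
          intro x hx
          obtain ⟨hxA, hxA'⟩ := Finset.mem_sdiff.1 hx
          by_contra hxS
          exact hxA' (Finset.sdiff_subset (hTeq ▸ Finset.mem_sdiff.2 ⟨hxA, hxS⟩))
        have hA'sub : A' \ A ⊆ S' := by
          intro x hx
          obtain ⟨hxA', hxA⟩ := Finset.mem_sdiff.1 hx
          by_contra hxS'
          exact hxA (Finset.sdiff_subset (hTeq.symm ▸ Finset.mem_sdiff.2 ⟨hxA', hxS'⟩))
        have hcards : A.card = A'.card := by rw [hunif A hAF, hunif A' hA'F]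
        have hBA' : B ≠ A' := by
          intro h
          subst h
          apply hAA'
          apply Finset.eq_of_subset_of_card_le _ (le_of_eq hcards.symm)
          intro x hxA
          by_cases hxS : x ∈ S
          · exact hSB hxS
          · exact Finset.sdiff_subset (hTeq ▸ Finset.mem_sdiff.2 ⟨hxA, hxS⟩)
        have hCA : C ≠ A := by
          intro h
          apply hAA'
          have hsAA : A' ⊆ A := by
            intro x hxA'
            by_cases hxS' : x ∈ S'
            · exact h ▸ hS'C hxS'
            · exact Finset.sdiff_subset (hTeq.symm ▸ Finset.mem_sdiff.2 ⟨hxA', hxS'⟩)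
          exact (Finset.eq_of_subset_of_card_le hsAA (le_of_eq hcards)).symm
        by_cases hBC : B = C
        · -- A △ A' ⊆ B ; pick a fourth member E
          obtain ⟨E, hEF, hE⟩ : ∃ E ∈ F, E ∉ ({B, A, A'} : Finset (Finset ℕ)) := by
            by_contra h
            push_neg at h
            have hsub3 : F ⊆ ({B, A, A'} : Finset (Finset ℕ)) := fun x hx => h x hx
            have hc3 : ({B, A, A'} : Finset (Finset ℕ)).card ≤ 3 := by
              refine le_trans (Finset.card_insert_le _ _) ?_
              refine Nat.succ_le_succ ?_
              refine le_trans (Finset.card_insert_le _ _) ?_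
              simp
            have := Finset.card_le_card hsub3
            omega
          simp only [Finset.mem_insert, Finset.mem_singleton, not_or] at hE
          obtain ⟨hEB, hEA, hEA'⟩ := hE
          have huni : B ∪ E ∪ A = B ∪ E ∪ A' := by
            apply union_union_eq_of_sdiffs
            · exact fun x hx => Finset.mem_union_left _ (hSB (hAsub hx))
            · exact fun x hx => Finset.mem_union_left _ (hBC ▸ hS'C (hA'sub hx))
          exact hAA' (hcanc B E A A' hBF hEF hAF hA'F (Ne.symm hEB) hBA hBA'
            hEA hEA' huni)
        · have huni : B ∪ C ∪ A = B ∪ C ∪ A' := by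
            apply union_union_eq_of_sdiffs
            · exact fun x hx => Finset.mem_union_left _ (hSB (hAsub hx))
            · exact fun x hx => Finset.mem_union_right _ (hS'C (hA'sub hx))
          exact hAA' (hcanc B C A A' hBF hCF hAF hA'F hBC hBA hBA' hCA hCA' huni)
  have hle := Finset.card_le_card_of_injOn (phi F n) hmaps hinj
  have hDcard : D.card = F.card * (2 * k + 1).choose (k + 1) := by
    rw [hD, Finset.card_sigma]
    rw [Finset.sum_congr rfl (fun A hA => by
      rw [Finset.card_powersetCard, hunif A hA])]
    rw [Finset.sum_const, smul_eq_mul]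
  have hTcard : T.card = (n + 1).choose (k + 1) := by
    rw [hT, Finset.card_powersetCard, Finset.card_range]
  rw [hDcard, hTcard] at hle
  exact hle

/-- a `(2k+1)`-uniform 2-cancellative family on `[n]` satisfies
`|F| ≤ binom(n+1,k+1)/((1/2) binom(2k+2,k+1))`. -/
theorem card_le_of_two_cancellative_odd_uniform (n k : ℕ) (F : Finset (Finset ℕ))
    (hsub : ∀ A ∈ F, A ⊆ Finset.range n) (hunif : ∀ A ∈ F, A.card = 2 * k + 1)
    (hcanc : TwoCancellative F) :
    (2 * k + 2).choose (k + 1) * F.card ≤ 2 * (n + 1).choose (k + 1) := by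
  classical
  by_cases hF4 : 4 ≤ F.card
  · have h := key_injection n k F hsub hunif hcanc hF4
    rw [choose_two_mul_succ k]
    calc 2 * (2 * k + 1).choose (k + 1) * F.card
        = 2 * (F.card * (2 * k + 1).choose (k + 1)) := by ring
      _ ≤ 2 * (n + 1).choose (k + 1) := Nat.mul_le_mul_left 2 h
  · push_neg at hF4
    -- F.card ≤ 3
    rcases Nat.eq_zero_or_pos F.card with h0 | h1
    · rw [h0]
      simp
    · obtain ⟨A, hA⟩ := Finset.card_pos.1 h1
      have hn1 : 2 * k + 1 ≤ n := by
        have h := Finset.card_le_card (hsub A hA)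
        rw [Finset.card_range, hunif A hA] at h
        exact h
      rcases Nat.lt_or_ge F.card 3 with h2 | h3
      · -- F.card ≤ 2
        have hc : (2 * k + 2).choose (k + 1) ≤ (n + 1).choose (k + 1) :=
          Nat.choose_le_choose _ (by omega)
        calc (2 * k + 2).choose (k + 1) * F.card
            ≤ (2 * k + 2).choose (k + 1) * 2 := Nat.mul_le_mul_left _ (by omega)
          _ = 2 * (2 * k + 2).choose (k + 1) := by ring
          _ ≤ 2 * (n + 1).choose (k + 1) := Nat.mul_le_mul_left 2 hc
      · -- F.card = 3
        have h33 : F.card = 3 := by omega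
        obtain ⟨A1, hA1, B1, hB1, hAB⟩ := Finset.one_lt_card.1 (by omega : 1 < F.card)
        have hn2 : 2 * k + 2 ≤ n := by
          have hnotsub : ¬ B1 ⊆ A1 := by
            intro h
            exact hAB (Finset.eq_of_subset_of_card_le h
              (by rw [hunif A1 hA1, hunif B1 hB1])).symm
          obtain ⟨x, hxB, hxA⟩ := Finset.not_subset.1 hnotsub
          have hss : A1 ⊂ A1 ∪ B1 := by
            refine (Finset.ssubset_iff_of_subset Finset.subset_union_left).2 ?_
            exact ⟨x, Finset.mem_union_right _ hxB, hxA⟩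
          have hlt := Finset.card_lt_card hss
          have hle := Finset.card_le_card
            (Finset.union_subset (hsub A1 hA1) (hsub B1 hB1))
          rw [Finset.card_range] at hle
          rw [hunif A1 hA1] at hlt
          omega
        -- arithmetic: 3 * C(2k+2,k+1) ≤ 2 * C(2k+3,k+1) ≤ 2 * C(n+1,k+1)
        have e1 : (2 * k + 2 + 1).choose (k + 1)
            = (2 * k + 2).choose k + (2 * k + 2).choose (k + 1) :=
          Nat.choose_succ_succ _ _
        have e2 : (2 * k + 2).choose (k + 1) = 2 * (2 * k + 1).choose (k + 1) :=
          choose_two_mul_succ k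
        have e3 : (2 * k + 1).choose (k + 1) ≤ (2 * k + 2).choose k := by
          have h4 : (2 * k + 1).choose (k + 1) = (2 * k + 1).choose k := by
            have h := Nat.choose_symm (show k + 1 ≤ 2 * k + 1 by omega)
            have h2' : 2 * k + 1 - (k + 1) = k := by omega
            rw [h2'] at h
            exact h.symm
          rw [h4]
          exact Nat.choose_le_choose _ (by omega)
        have e4 : (2 * k + 2 + 1).choose (k + 1) ≤ (n + 1).choose (k + 1) :=
          Nat.choose_le_choose _ (by omega)
        rw [h33]
        omega
end

section
/- c(n,2) < 9·√n·(5/4)^n for all n ≥ 1, where c(n,2) is the maximum size of a 2-cancellative family of subsets of [n]. -/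
/-- A family is `t`-cancellative: for all `t+2` distinct members `A 0, …, A (t-1), B, C`,
`(⋃ i, A i) ∪ B = (⋃ i, A i) ∪ C` implies `B = C`. -/
def IsTCancellative (t : ℕ) (F : Finset (Finset ℕ)) : Prop :=
  ∀ (A : Fin t → Finset ℕ) (B C : Finset ℕ),
    (∀ i, A i ∈ F) → B ∈ F → C ∈ F →
    Function.Injective A → (∀ i, A i ≠ B) → (∀ i, A i ≠ C) →
    Finset.univ.biUnion A ∪ B = Finset.univ.biUnion A ∪ C → B = C

/-- A family is `g`-cover-free: for `g+1` distinct members `A 0, …, A g`,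
`A 0` is not contained in `A 1 ∪ … ∪ A g`. -/
def IsCoverFree (g : ℕ) (F : Finset (Finset ℕ)) : Prop :=
  ∀ (A : Fin (g + 1) → Finset ℕ), (∀ i, A i ∈ F) → Function.Injective A →
    ¬ A 0 ⊆ (Finset.univ.erase 0).biUnion A

/-- `c(n,t)`: maximum size of a `t`-cancellative family on `[n]`. -/
noncomputable def cancelMax (n t : ℕ) : ℕ :=
  sSup {m | ∃ F : Finset (Finset ℕ),
    (∀ A ∈ F, A ⊆ Finset.range n) ∧ IsTCancellative t F ∧ F.card = m}

/-- `C(n,g)`: maximum size of a `g`-cover-free family on `[n]`. -/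
noncomputable def coverFreeMax (n g : ℕ) : ℕ :=
  sSup {m | ∃ F : Finset (Finset ℕ),
    (∀ A ∈ F, A ⊆ Finset.range n) ∧ IsCoverFree g F ∧ F.card = m}

/-- `c_r(n,t)`: maximum size of an `r`-uniform `t`-cancellative family on `[n]`. -/
noncomputable def cUnifMax (n r t : ℕ) : ℕ :=
  sSup {m | ∃ F : Finset (Finset ℕ),
    (∀ A ∈ F, A ⊆ Finset.range n ∧ A.card = r) ∧ IsTCancellative t F ∧ F.card = m}

private lemma biUnion_fin_two (f : Fin 2 → Finset ℕ) :
    Finset.univ.biUnion f = f 0 ∪ f 1 := by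
  have h : (Finset.univ : Finset (Fin 2)) = {0, 1} := by decide
  rw [h, Finset.biUnion_insert, Finset.singleton_biUnion]

private def degF (𝓕 : Finset (Finset ℕ)) (S : Finset ℕ) : ℕ :=
  (𝓕.filter fun F => S ⊆ F).card

private lemma lemmaM (𝓕 : Finset (Finset ℕ)) (h2 : IsTCancellative 2 𝓕)
    (v y y' F F' G G' : Finset ℕ)
    (hF : F ∈ 𝓕) (hF' : F' ∈ 𝓕) (hG : G ∈ 𝓕) (hG' : G' ∈ 𝓕)
    (hFeq : F = v ∪ y) (hF'eq : F' = v ∪ y')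
    (hyG : y ⊆ G ∪ G') (hy'G : y' ⊆ G ∪ G')
    (hGF : G ≠ F) (hGF' : G ≠ F') (hG'F : G' ≠ F) (hG'F' : G' ≠ F')
    (hGG' : G ≠ G') (hne : F ≠ F') : False := by
  apply hne
  have hinj : Function.Injective ![G, G'] := by
    intro i j hij
    fin_cases i <;> fin_cases j <;> simp_all
  have hmem : ∀ i, ![G, G'] i ∈ 𝓕 := by
    intro i; fin_cases i <;> simpa
  have hneB : ∀ i, ![G, G'] i ≠ F := by
    intro i; fin_cases i <;> simpa
  have hneC : ∀ i, ![G, G'] i ≠ F' := by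
    intro i; fin_cases i <;> simpa
  apply h2 ![G, G'] F F' hmem hF hF' hinj hneB hneC
  rw [biUnion_fin_two]
  simp only [Matrix.cons_val_zero, Matrix.cons_val_one, Matrix.head_cons]
  have hFsub : F ⊆ G ∪ G' ∪ F' := by
    rw [hFeq]
    apply Finset.union_subset
    · exact Finset.Subset.trans (hF'eq ▸ Finset.subset_union_left) Finset.subset_union_right
    · exact Finset.Subset.trans hyG Finset.subset_union_left
  have hF'sub : F' ⊆ G ∪ G' ∪ F := by
    rw [hF'eq]
    apply Finset.union_subset
    · exact Finset.Subset.trans (hFeq ▸ Finset.subset_union_left) Finset.subset_union_right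
    · exact Finset.Subset.trans hy'G Finset.subset_union_left
  apply Finset.Subset.antisymm
  · intro x hx
    rcases Finset.mem_union.mp hx with h | h
    · exact Finset.mem_union_left _ h
    · exact hFsub h
  · intro x hx
    rcases Finset.mem_union.mp hx with h | h
    · exact Finset.mem_union_left _ h
    · exact hF'sub h

private lemma central_unique (𝓕 : Finset (Finset ℕ)) (h2 : IsTCancellative 2 𝓕)
    (hm : 4 ≤ 𝓕.card) (k : ℕ) (hcard : ∀ A ∈ 𝓕, A.card = 2 * k)
    (v F F' : Finset ℕ) (hvk : v.card = k)
    (hF : F ∈ 𝓕) (hF' : F' ∈ 𝓕) (hvF : v ⊆ F) (hvF' : v ⊆ F')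
    (hdF : 2 ≤ degF 𝓕 (F \ v)) (hdF' : 2 ≤ degF 𝓕 (F' \ v)) : F = F' := by
  by_contra hne
  set y := F \ v with hy
  set y' := F' \ v with hy'
  have hyk : y.card = k := by
    rw [hy, Finset.card_sdiff_of_subset hvF, hcard F hF, hvk]; omega
  have hy'k : y'.card = k := by
    rw [hy', Finset.card_sdiff_of_subset hvF', hcard F' hF', hvk]; omega
  have hFeq : F = v ∪ y := (Finset.union_sdiff_of_subset hvF).symm
  have hF'eq : F' = v ∪ y' := (Finset.union_sdiff_of_subset hvF').symm
  -- a set containing one of the halves y, y' and contained in v ∪ (other half) forces equality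
  have half_eq : ∀ z z' W : Finset ℕ, z.card = k → z'.card = k → Disjoint z v →
      z ⊆ W → W = v ∪ z' → z = z' := by
    intro z z' W hz hz' hdisj hzW hWeq
    apply Finset.eq_of_subset_of_card_le _ (le_of_eq (by omega))
    intro a ha
    have : a ∈ v ∪ z' := hWeq ▸ hzW ha
    rcases Finset.mem_union.mp this with h | h
    · exact (Finset.disjoint_left.mp hdisj ha h).elim
    · exact h
  have hyy' : y ≠ y' := by
    intro h
    exact hne (by rw [hFeq, h, ← hF'eq])
  obtain ⟨G, hGmem, hGF⟩ := Finset.exists_mem_ne (by unfold degF at hdF; omega : 1 < (𝓕.filter fun X => y ⊆ X).card) F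
  obtain ⟨G', hG'mem, hG'F'⟩ := Finset.exists_mem_ne (by unfold degF at hdF'; omega : 1 < (𝓕.filter fun X => y' ⊆ X).card) F'
  rw [Finset.mem_filter] at hGmem hG'mem
  have hGF' : G ≠ F' := by
    intro h
    exact hyy' (half_eq y y' G hyk hy'k (hy ▸ Finset.sdiff_disjoint) hGmem.2 (h ▸ hF'eq))
  have hG'F : G' ≠ F := by
    intro h
    exact hyy' (half_eq y' y G' hy'k hyk (hy' ▸ Finset.sdiff_disjoint) hG'mem.2 (h ▸ hFeq)).symm
  by_cases hGG' : G = G'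
  · -- need a fourth set E
    have hcard3 : ({F, F', G} : Finset (Finset ℕ)).card ≤ 3 := by
      apply le_trans (Finset.card_insert_le _ _)
      have := Finset.card_insert_le F' ({G} : Finset (Finset ℕ))
      simp at this ⊢
      omega
    have hnonempty : (𝓕 \ {F, F', G}).Nonempty := by
      rw [← Finset.card_pos]
      have := Finset.le_card_sdiff ({F, F', G} : Finset (Finset ℕ)) 𝓕
      omega
    obtain ⟨E, hE⟩ := hnonempty
    rw [Finset.mem_sdiff, Finset.mem_insert, Finset.mem_insert, Finset.mem_singleton] at hE
    push_neg at hE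
    obtain ⟨hEmem, hEF, hEF', hEG⟩ := hE
    exact lemmaM 𝓕 h2 v y y' F F' G E hF hF' hGmem.1 hEmem hFeq hF'eq
      (hGmem.2.trans Finset.subset_union_left)
      ((hGG' ▸ hG'mem.2).trans Finset.subset_union_left)
      hGF hGF' hEF hEF' (fun h => hEG h.symm) hne
  · exact lemmaM 𝓕 h2 v y y' F F' G G' hF hF' hGmem.1 hG'mem.1 hFeq hF'eq
      (hGmem.2.trans Finset.subset_union_left)
      (hG'mem.2.trans Finset.subset_union_right)
      hGF hGF' hG'F hG'F' hGG' hne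

private def phiF (𝓕 : Finset (Finset ℕ)) (p : Finset ℕ × Finset ℕ) : Finset ℕ :=
  if degF 𝓕 p.2 ≤ 1 then p.2
  else if degF 𝓕 (p.1 \ p.2) ≤ 1 then p.1 \ p.2 else p.2

private lemma even_bound (n k : ℕ) (𝓕 : Finset (Finset ℕ)) (h2 : IsTCancellative 2 𝓕)
    (hsub : ∀ A ∈ 𝓕, A ⊆ Finset.range n) (hcard : ∀ A ∈ 𝓕, A.card = 2 * k) :
    𝓕.card * (2 * k).choose k ≤ 2 * n.choose k := by
  rcases Nat.eq_zero_or_pos k with hk0 | hk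
  · -- k = 0 : all members are ∅, so 𝓕.card ≤ 1
    subst hk0
    have h1 : 𝓕.card ≤ 1 := by
      apply Finset.card_le_one.mpr
      intro a ha b hb
      have ha' := hcard a ha
      have hb' := hcard b hb
      have ha2 : a = ∅ := Finset.card_eq_zero.mp (by omega)
      have hb2 : b = ∅ := Finset.card_eq_zero.mp (by omega)
      rw [ha2, hb2]
    simp only [Nat.mul_zero, Nat.choose_zero_right, Nat.choose_self, mul_one]
    omega
  rcases le_or_gt 𝓕.card 3 with hm | hm
  · -- few members
    rcases Finset.eq_empty_or_nonempty 𝓕 with he | ⟨A0, hA0⟩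
    · simp [he]
    have h2kn : 2 * k ≤ n := by
      have := Finset.card_le_card (hsub A0 hA0)
      rw [hcard A0 hA0, Finset.card_range] at this
      exact this
    rcases le_or_gt 𝓕.card 2 with hm2 | hm3
    · calc 𝓕.card * (2 * k).choose k ≤ 2 * (2 * k).choose k := by
            exact Nat.mul_le_mul_right _ hm2
        _ ≤ 2 * n.choose k := by
            exact Nat.mul_le_mul_left _ (Nat.choose_le_choose k h2kn)
    · -- exactly 3 members : n ≥ 2k + 1
      have h2k1n : 2 * k + 1 ≤ n := by
        rcases lt_or_ge (2 * k) n with h | h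
        · omega
        · exfalso
          obtain ⟨a, ha, b, hb, hab⟩ := Finset.one_lt_card.mp (by omega : 1 < 𝓕.card)
          have hra : a = Finset.range n := by
            apply Finset.eq_of_subset_of_card_le (hsub a ha)
            rw [hcard a ha, Finset.card_range]; exact h
          have hrb : b = Finset.range n := by
            apply Finset.eq_of_subset_of_card_le (hsub b hb)
            rw [hcard b hb, Finset.card_range]; exact h
          exact hab (hra.trans hrb.symm)
      -- 3 * C(2k,k) ≤ 2 * C(2k+1,k)
      obtain ⟨j, rfl⟩ : ∃ j, k = j + 1 := ⟨k - 1, by omega⟩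
      have hid : (2 * (j + 1)).choose (j + 1) * (j + 1) =
          (2 * (j + 1)).choose j * (2 * (j + 1) - j) := Nat.choose_succ_right_eq _ _
      have hle : (2 * (j + 1)).choose (j + 1) ≤ 2 * (2 * (j + 1)).choose j := by
        have h1 : (2 * (j + 1)).choose (j + 1) * (j + 1) ≤ (2 * (j + 1)).choose j * (2 * (j + 1)) := by
          rw [hid]; exact Nat.mul_le_mul_left _ (by omega)
        have h2' : (2 * (j + 1)).choose j * (2 * (j + 1)) = (2 * (2 * (j + 1)).choose j) * (j + 1) := by ring
        rw [h2'] at h1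
        exact Nat.le_of_mul_le_mul_right h1 (by omega)
      have hpascal : (2 * (j + 1) + 1).choose (j + 1) =
          (2 * (j + 1)).choose j + (2 * (j + 1)).choose (j + 1) := by
        simpa using Nat.choose_succ_succ (2 * (j + 1)) j
      calc 𝓕.card * (2 * (j + 1)).choose (j + 1) ≤ 3 * (2 * (j + 1)).choose (j + 1) := by
            exact Nat.mul_le_mul_right _ hm
        _ ≤ 2 * (2 * (j + 1) + 1).choose (j + 1) := by rw [hpascal]; omega
        _ ≤ 2 * n.choose (j + 1) := Nat.mul_le_mul_left _ (Nat.choose_le_choose _ h2k1n)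
  · -- main case : 𝓕.card ≥ 4
    have hm4 : 4 ≤ 𝓕.card := hm
    set P : Finset (Finset ℕ × Finset ℕ) :=
      𝓕.biUnion (fun F => (F.powersetCard k).image (fun S => (F, S))) with hP
    have hmemP : ∀ p ∈ P, p.1 ∈ 𝓕 ∧ p.2 ⊆ p.1 ∧ p.2.card = k := by
      intro p hp
      rw [hP, Finset.mem_biUnion] at hp
      obtain ⟨F, hF, hp⟩ := hp
      rw [Finset.mem_image] at hp
      obtain ⟨S, hS, rfl⟩ := hp
      rw [Finset.mem_powersetCard] at hS
      exact ⟨hF, hS.1, hS.2⟩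
    have hcardP : P.card = 𝓕.card * (2 * k).choose k := by
      rw [hP, Finset.card_biUnion]
      · rw [Finset.sum_congr rfl (fun F hF => ?_), Finset.sum_const, smul_eq_mul]
        rw [Finset.card_image_of_injective _ (fun a b h => (Prod.mk.injEq _ _ _ _).mp h |>.2),
          Finset.card_powersetCard, hcard F hF]
      · intro a ha b hb hab
        simp only [Finset.disjoint_left, Finset.mem_image]
        rintro p ⟨S, hS, rfl⟩ ⟨S', hS', h⟩
        exact hab ((Prod.mk.injEq _ _ _ _).mp h |>.1.symm)
    have hkey : ∀ x ∈ (Finset.range n).powersetCard k,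
        (P.filter fun p => phiF 𝓕 p = x).card ≤ 2 := by
      intro x hx
      set T := P.filter fun p => phiF 𝓕 p = x with hT
      have hchar : ∀ p ∈ T, p.1 ∈ 𝓕 ∧ x ⊆ p.1 ∧ (p.2 = x ∨ p.2 = p.1 \ x) ∧
          (2 ≤ degF 𝓕 x → 2 ≤ degF 𝓕 (p.1 \ x)) := by
        intro p hp
        rw [hT, Finset.mem_filter] at hp
        obtain ⟨hpP, hphi⟩ := hp
        obtain ⟨hp1, hp21, hp22⟩ := hmemP p hpP
        unfold phiF at hphi
        split_ifs at hphi with d1 d2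
        · -- x = p.2, deg x ≤ 1
          subst hphi
          exact ⟨hp1, hp21, Or.inl rfl, fun h => absurd h (by omega)⟩
        · -- x = p.1 \ p.2, deg p.2 ≥ 2, deg x ≤ 1
          subst hphi
          refine ⟨hp1, Finset.sdiff_subset, Or.inr ?_, fun h => absurd h (by omega)⟩
          rw [Finset.sdiff_sdiff_eq_self hp21]
        · -- x = p.2, both degrees ≥ 2
          subst hphi
          exact ⟨hp1, hp21, Or.inl rfl, fun _ => by omega⟩
      rcases Finset.eq_empty_or_nonempty T with he | ⟨p0, hp0⟩
      · simp [he]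
      have hxk : x.card = k := (Finset.mem_powersetCard.mp hx).2
      have huniq : ∀ p ∈ T, p.1 = p0.1 := by
        intro p hp
        obtain ⟨hp1, hpx, _, hpc⟩ := hchar p hp
        obtain ⟨hq1, hqx, _, hqc⟩ := hchar p0 hp0
        rcases le_or_gt (degF 𝓕 x) 1 with hdx | hdx
        · -- at most one member contains x
          have : (𝓕.filter fun F => x ⊆ F).card ≤ 1 := hdx
          exact Finset.card_le_one.mp this p.1 (Finset.mem_filter.mpr ⟨hp1, hpx⟩)
            p0.1 (Finset.mem_filter.mpr ⟨hq1, hqx⟩)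
        · exact central_unique 𝓕 h2 hm4 k hcard x p.1 p0.1 hxk hp1 hq1 hpx hqx
            (hpc hdx) (hqc hdx)
      have hsubT : T ⊆ {(p0.1, x), (p0.1, p0.1 \ x)} := by
        intro q hq
        have hq1 := huniq q hq
        obtain ⟨_, _, hq2, _⟩ := hchar q hq
        rw [Finset.mem_insert, Finset.mem_singleton]
        rcases hq2 with h | h
        · left; rw [← hq1, ← h]
        · right; rw [← hq1, ← h]
      calc T.card ≤ _ := Finset.card_le_card hsubT
        _ ≤ 2 := Finset.card_insert_le _ _ |>.trans (by simp)
    have hmaps : ∀ p ∈ P, phiF 𝓕 p ∈ (Finset.range n).powersetCard k := by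
      intro p hp
      obtain ⟨hp1, hp21, hp22⟩ := hmemP p hp
      have hsub1 : p.1 ⊆ Finset.range n := hsub p.1 hp1
      have hc : (p.1 \ p.2).card = k := by
        rw [Finset.card_sdiff_of_subset hp21, hcard p.1 hp1, hp22]; omega
      unfold phiF
      split_ifs with d1 d2
      · exact Finset.mem_powersetCard.mpr ⟨hp21.trans hsub1, hp22⟩
      · exact Finset.mem_powersetCard.mpr ⟨Finset.sdiff_subset.trans hsub1, hc⟩
      · exact Finset.mem_powersetCard.mpr ⟨hp21.trans hsub1, hp22⟩
    have := Finset.card_le_mul_card_image_of_maps_to hmaps 2 hkey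
    rw [hcardP, Finset.card_powersetCard, Finset.card_range] at this
    exact this

private lemma cancellative_subset {t : ℕ} {F G : Finset (Finset ℕ)}
    (h : IsTCancellative t G) (hFG : F ⊆ G) : IsTCancellative t F := by
  intro A B C hA hB hC hinj hAB hAC hU
  exact h A B C (fun i => hFG (hA i)) (hFG hB) (hFG hC) hinj hAB hAC hU

private lemma tcancel_image_insert (n : ℕ) (𝓕 : Finset (Finset ℕ))
    (hsub : ∀ A ∈ 𝓕, A ⊆ Finset.range n) (h2 : IsTCancellative 2 𝓕) :
    IsTCancellative 2 (𝓕.image (insert n)) := by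
  have hnot : ∀ A ∈ 𝓕, n ∉ A := fun A hA hn => by
    have := hsub A hA hn; rw [Finset.mem_range] at this; omega
  intro A B C hA hB hC hinj hAB hAC hU
  obtain ⟨b, hb, rfl⟩ := Finset.mem_image.mp hB
  obtain ⟨c, hc, rfl⟩ := Finset.mem_image.mp hC
  have ha : ∀ i, ∃ a ∈ 𝓕, insert n a = A i := fun i => Finset.mem_image.mp (hA i)
  choose a hamem haeq using ha
  have hins : ∀ X Y : Finset ℕ, n ∉ X → n ∉ Y → insert n X = insert n Y → X = Y := by
    intro X Y hX hY h
    rw [← Finset.erase_insert hX, ← Finset.erase_insert hY, h]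
  have hcong : a 0 ∪ a 1 ∪ b = a 0 ∪ a 1 ∪ c := by
    apply hins
    · simp only [Finset.mem_union]
      push_neg
      exact ⟨⟨hnot _ (hamem 0), hnot _ (hamem 1)⟩, hnot _ hb⟩
    · simp only [Finset.mem_union]
      push_neg
      exact ⟨⟨hnot _ (hamem 0), hnot _ (hamem 1)⟩, hnot _ hc⟩
    · have e1 : insert n (a 0 ∪ a 1 ∪ b) = Finset.univ.biUnion A ∪ insert n b := by
        rw [biUnion_fin_two, ← haeq 0, ← haeq 1]
        simp [Finset.insert_union, Finset.union_insert, Finset.union_assoc]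
      have e2 : insert n (a 0 ∪ a 1 ∪ c) = Finset.univ.biUnion A ∪ insert n c := by
        rw [biUnion_fin_two, ← haeq 0, ← haeq 1]
        simp [Finset.insert_union, Finset.union_insert, Finset.union_assoc]
      rw [e1, e2, hU]
  have hb2 : b = c := by
    apply h2 a b c hamem hb hc
    · intro i j hij
      apply hinj
      rw [← haeq i, ← haeq j, hij]
    · intro i h
      exact hAB i (by rw [← haeq i, h])
    · intro i h
      exact hAC i (by rw [← haeq i, h])
    · rw [biUnion_fin_two]
      exact hcong
  rw [hb2]

private lemma odd_bound (n k : ℕ) (𝓕 : Finset (Finset ℕ)) (h2 : IsTCancellative 2 𝓕)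
    (hsub : ∀ A ∈ 𝓕, A ⊆ Finset.range n) (hcard : ∀ A ∈ 𝓕, A.card = 2 * k + 1) :
    𝓕.card * (2 * (k + 1)).choose (k + 1) ≤ 2 * (n + 1).choose (k + 1) := by
  have hnot : ∀ A ∈ 𝓕, n ∉ A := fun A hA hn => by
    have := hsub A hA hn; rw [Finset.mem_range] at this; omega
  set 𝓖 := 𝓕.image (insert n) with h𝓖
  have hcard𝓖 : 𝓖.card = 𝓕.card := by
    rw [h𝓖]
    apply Finset.card_image_of_injOn
    intro X hX Y hY h
    rw [← Finset.erase_insert (hnot X hX), ← Finset.erase_insert (hnot Y hY), h]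
  have := even_bound (n + 1) (k + 1) 𝓖 (tcancel_image_insert n 𝓕 hsub h2)
    (fun A hA => ?_) (fun A hA => ?_)
  · rw [hcard𝓖] at this; exact this
  · obtain ⟨X, hX, rfl⟩ := Finset.mem_image.mp hA
    intro x hx
    rcases Finset.mem_insert.mp hx with rfl | hx
    · rw [Finset.mem_range]; omega
    · have := hsub X hX hx; rw [Finset.mem_range] at this ⊢; omega
  · obtain ⟨X, hX, rfl⟩ := Finset.mem_image.mp hA
    rw [Finset.card_insert_of_notMem (hnot X hX), hcard X hX]
    ring

private lemma sixteen_pow_le (k : ℕ) (hk : 1 ≤ k) :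
    16 ^ k ≤ 4 * k * ((2 * k).choose k) ^ 2 := by
  induction k with
  | zero => omega
  | succ j ih =>
    rcases Nat.eq_zero_or_pos j with rfl | hj
    · simp [Nat.choose]
    have ihj := ih hj
    have hrec : (j + 1) * (2 * (j + 1)).choose (j + 1) = 2 * (2 * j + 1) * (2 * j).choose j := by
      have := Nat.succ_mul_centralBinom_succ j
      simpa [Nat.centralBinom] using this
    have key : 16 ^ (j + 1) * (j + 1) ^ 2 ≤
        (4 * (j + 1) * ((2 * (j + 1)).choose (j + 1)) ^ 2) * (j + 1) ^ 2 := by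
      calc 16 ^ (j + 1) * (j + 1) ^ 2 = 16 * (j + 1) ^ 2 * 16 ^ j := by ring
        _ ≤ 16 * (j + 1) ^ 2 * (4 * j * ((2 * j).choose j) ^ 2) := Nat.mul_le_mul_left _ ihj
        _ = (4 * j * (j + 1)) * (16 * (j + 1) * ((2 * j).choose j) ^ 2) := by ring
        _ ≤ ((2 * j + 1) ^ 2) * (16 * (j + 1) * ((2 * j).choose j) ^ 2) :=
            Nat.mul_le_mul_right _ (by nlinarith)
        _ = 4 * (j + 1) * (2 * (2 * j + 1) * (2 * j).choose j) ^ 2 := by ring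
        _ = 4 * (j + 1) * ((j + 1) * (2 * (j + 1)).choose (j + 1)) ^ 2 := by rw [← hrec]
        _ = (4 * (j + 1) * ((2 * (j + 1)).choose (j + 1)) ^ 2) * (j + 1) ^ 2 := by ring
    exact Nat.le_of_mul_le_mul_right key (by positivity)

private lemma real_central (k : ℕ) (hk : 1 ≤ k) :
    (4 : ℝ) ^ k ≤ 2 * Real.sqrt k * ((2 * k).choose k) := by
  have hnat := sixteen_pow_le k hk
  have hcast : (16 : ℝ) ^ k ≤ 4 * k * ((2 * k).choose k : ℝ) ^ 2 := by
    exact_mod_cast hnat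
  have hrhs : (0 : ℝ) ≤ 2 * Real.sqrt k * ((2 * k).choose k) := by positivity
  have hsq : ((4 : ℝ) ^ k) ^ 2 ≤ (2 * Real.sqrt k * ((2 * k).choose k)) ^ 2 := by
    have h1 : (2 * Real.sqrt k * ((2 * k).choose k) : ℝ) ^ 2
        = 4 * (Real.sqrt k ^ 2) * ((2 * k).choose k : ℝ) ^ 2 := by ring
    rw [h1, Real.sq_sqrt (by positivity : (0:ℝ) ≤ (k:ℝ))]
    calc ((4 : ℝ) ^ k) ^ 2 = (16 : ℝ) ^ k := by
          rw [← pow_mul, mul_comm, pow_mul]; norm_num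
      _ ≤ 4 * k * ((2 * k).choose k : ℝ) ^ 2 := hcast
  exact le_of_pow_le_pow_left₀ two_ne_zero hrhs hsq

private lemma div_est (k m c : ℕ) (hk : 1 ≤ k)
    (h : m * (2 * k).choose k ≤ 2 * c) :
    (m : ℝ) ≤ 4 * Real.sqrt k * c * (1 / 4) ^ k := by
  have hCB : (0 : ℝ) < ((2 * k).choose k : ℝ) := by
    exact_mod_cast Nat.choose_pos (by omega : k ≤ 2 * k)
  have hcast : (m : ℝ) * ((2 * k).choose k) ≤ 2 * c := by exact_mod_cast h
  have h4 := real_central k hk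
  have h4k : (0 : ℝ) < 4 ^ k := by positivity
  rw [show (4 : ℝ) * Real.sqrt k * c * (1/4) ^ k = 4 * Real.sqrt k * c / 4 ^ k by
    rw [div_pow, one_pow, div_eq_mul_inv, div_eq_mul_inv, one_mul], le_div_iff₀ h4k]
  have hs : (0 : ℝ) ≤ Real.sqrt k := Real.sqrt_nonneg _
  nlinarith [mul_le_mul_of_nonneg_left h4 (by positivity : (0:ℝ) ≤ (m:ℝ)),
    mul_le_mul_of_nonneg_left hcast (by positivity : (0:ℝ) ≤ 2 * Real.sqrt k)]

private lemma binom_sum (n : ℕ) :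
    ∑ k ∈ Finset.range (n + 1), ((n.choose k : ℝ)) * (1 / 4) ^ k = (5 / 4) ^ n := by
  have h := add_pow (1/4 : ℝ) 1 n
  norm_num at h
  rw [h]
  apply Finset.sum_congr rfl
  intro k hk
  ring

private lemma sum_two_mul (m : ℕ) (f : ℕ → ℕ) :
    ∑ r ∈ Finset.range (2 * m), f r = ∑ k ∈ Finset.range m, (f (2 * k) + f (2 * k + 1)) := by
  induction m with
  | zero => simp
  | succ j ih =>
    rw [Finset.sum_range_succ, ← ih, show 2 * (j + 1) = 2 * j + 1 + 1 by ring,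
      Finset.sum_range_succ, Finset.sum_range_succ]
    ring


/-- `c(n,2) < 9 √n (5/4)^n` for all `n ≥ 1`. -/
theorem cancelMax_two_lt (n : ℕ) (hn : 1 ≤ n) :
    (cancelMax n 2 : ℝ) < 9 * Real.sqrt n * (5 / 4) ^ n := by
  -- extract an extremal family
  have hmem : cancelMax n 2 ∈ {m | ∃ F : Finset (Finset ℕ),
      (∀ A ∈ F, A ⊆ Finset.range n) ∧ IsTCancellative 2 F ∧ F.card = m} := by
    apply Nat.sSup_mem
    · exact ⟨0, ∅, by simp, fun A B C hA => absurd (hA 0) (by simp), rfl⟩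
    · refine ⟨2 ^ n, ?_⟩
      rintro m ⟨F, hF, -, rfl⟩
      calc F.card ≤ (Finset.range n).powerset.card :=
            Finset.card_le_card (fun A hA => Finset.mem_powerset.mpr (hF A hA))
        _ = 2 ^ n := by rw [Finset.card_powerset, Finset.card_range]
  obtain ⟨F₀, hsub₀, hcanc₀, hcard₀⟩ := hmem
  rw [← hcard₀]
  have hcardmem : ∀ A ∈ F₀, A.card ≤ n := by
    intro A hA
    calc A.card ≤ (Finset.range n).card := Finset.card_le_card (hsub₀ A hA)
      _ = n := Finset.card_range n
  -- the case n = 1 is handled directly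
  rcases eq_or_lt_of_le hn with h1 | hn2
  · have hb : F₀.card ≤ 2 := by
      calc F₀.card ≤ (Finset.range n).powerset.card :=
            Finset.card_le_card (fun A hA => Finset.mem_powerset.mpr (hsub₀ A hA))
        _ = 2 ^ n := by rw [Finset.card_powerset, Finset.card_range]
        _ = 2 := by rw [← h1]; norm_num
    have h2 : (F₀.card : ℝ) ≤ 2 := by exact_mod_cast hb
    rw [← h1]
    simp only [Nat.cast_one, Real.sqrt_one]
    nlinarith
  have hn2' : 2 ≤ n := hn2
  -- layer counts
  set L : ℕ → ℕ := fun r => (F₀.filter fun A => A.card = r).card with hL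
  have hlayer_sub : ∀ r, ∀ A ∈ F₀.filter fun A => A.card = r, A ⊆ Finset.range n :=
    fun r A hA => hsub₀ A (Finset.mem_filter.mp hA).1
  have hlayer_canc : ∀ r, IsTCancellative 2 (F₀.filter fun A => A.card = r) :=
    fun r => cancellative_subset hcanc₀ (Finset.filter_subset _ _)
  have hlayer_card : ∀ r, ∀ A ∈ F₀.filter fun A => A.card = r, A.card = r :=
    fun r A hA => (Finset.mem_filter.mp hA).2
  have hsplit : F₀.card = ∑ k ∈ Finset.range (n + 1), (L (2 * k) + L (2 * k + 1)) := by
    rw [← sum_two_mul]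
    apply Finset.card_eq_sum_card_fiberwise
    intro A hA
    rw [Finset.mem_coe, Finset.mem_range]
    have := hcardmem A hA
    omega
  -- even layers
  set E : ℕ → ℝ := fun k =>
    if k = 0 then 2 else 4 * Real.sqrt ((n : ℝ) / 2) * (n.choose k) * (1 / 4) ^ k with hE
  have hEbound : ∀ k, (L (2 * k) : ℝ) ≤ E k := by
    intro k
    rcases Nat.eq_zero_or_pos k with rfl | hk
    · have hb := even_bound n 0 _ (hlayer_canc 0) (hlayer_sub 0)
        (fun A hA => by simpa using hlayer_card 0 A hA)
      simp only [hE, if_pos rfl]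
      have h2 : L (2 * 0) ≤ 2 := by
        have he : L (2 * 0) = (F₀.filter fun A => A.card = 0).card := by
          rw [hL]
        rw [he]
        simpa using hb
      exact_mod_cast h2
    rcases le_or_gt (2 * k) n with hkn | hkn
    · have hb := even_bound n k _ (hlayer_canc (2 * k)) (hlayer_sub (2 * k)) (hlayer_card (2 * k))
      have := div_est k _ _ hk hb
      rw [hE]
      simp only [if_neg (by omega : ¬ k = 0)]
      have hsq : Real.sqrt (k : ℝ) ≤ Real.sqrt ((n : ℝ) / 2) := by
        apply Real.sqrt_le_sqrt
        have : (2 * k : ℝ) ≤ n := by exact_mod_cast hkn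
        linarith
      calc (L (2 * k) : ℝ) ≤ 4 * Real.sqrt k * (n.choose k) * (1 / 4) ^ k := this
        _ ≤ 4 * Real.sqrt ((n : ℝ) / 2) * (n.choose k) * (1 / 4) ^ k := by
            rw [show (4:ℝ) * Real.sqrt k * (n.choose k) * (1 / 4) ^ k
                = Real.sqrt (k:ℝ) * (4 * (n.choose k) * (1 / 4) ^ k) by ring,
              show (4:ℝ) * Real.sqrt ((n : ℝ) / 2) * (n.choose k) * (1 / 4) ^ k
                = Real.sqrt ((n : ℝ) / 2) * (4 * (n.choose k) * (1 / 4) ^ k) by ring]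
            exact mul_le_mul_of_nonneg_right hsq (by positivity)
    · have hzero : L (2 * k) = 0 := by
        rw [hL]
        simp only [Finset.card_eq_zero]
        apply Finset.filter_eq_empty_iff.mpr
        intro A hA
        have := hcardmem A hA
        omega
      rw [hzero]
      simp only [Nat.cast_zero, hE, if_neg (by omega : ¬ k = 0)]
      positivity
  -- odd layers
  set O : ℕ → ℝ := fun k =>
    4 * Real.sqrt (((n : ℝ) + 1) / 2) * ((n + 1).choose (k + 1)) * (1 / 4) ^ (k + 1) with hO
  have hObound : ∀ k, (L (2 * k + 1) : ℝ) ≤ O k := by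
    intro k
    rcases le_or_gt (2 * k + 1) n with hkn | hkn
    · have hb := odd_bound n k _ (hlayer_canc (2 * k + 1)) (hlayer_sub (2 * k + 1))
        (hlayer_card (2 * k + 1))
      have := div_est (k + 1) _ _ (by omega) hb
      rw [hO]
      have hsq : Real.sqrt ((k : ℝ) + 1) ≤ Real.sqrt (((n : ℝ) + 1) / 2) := by
        apply Real.sqrt_le_sqrt
        have : (2 * k + 1 : ℝ) ≤ n := by exact_mod_cast hkn
        linarith
      calc (L (2 * k + 1) : ℝ) ≤ 4 * Real.sqrt ((k : ℝ) + 1) * ((n + 1).choose (k + 1)) * (1 / 4) ^ (k + 1) := by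
            have h5 := div_est (k + 1) (L (2 * k + 1)) ((n + 1).choose (k + 1)) (by omega) hb
            have e : ((k + 1 : ℕ) : ℝ) = (k : ℝ) + 1 := by push_cast; ring
            rw [← e]
            exact_mod_cast h5
        _ ≤ 4 * Real.sqrt (((n : ℝ) + 1) / 2) * ((n + 1).choose (k + 1)) * (1 / 4) ^ (k + 1) := by
            rw [show (4:ℝ) * Real.sqrt ((k : ℝ) + 1) * ((n + 1).choose (k + 1)) * (1 / 4) ^ (k + 1)
                = Real.sqrt ((k : ℝ) + 1) * (4 * ((n + 1).choose (k + 1)) * (1 / 4) ^ (k + 1)) by ring,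
              show (4:ℝ) * Real.sqrt (((n : ℝ) + 1) / 2) * ((n + 1).choose (k + 1)) * (1 / 4) ^ (k + 1)
                = Real.sqrt (((n : ℝ) + 1) / 2) * (4 * ((n + 1).choose (k + 1)) * (1 / 4) ^ (k + 1)) by ring]
            exact mul_le_mul_of_nonneg_right hsq (by positivity)
    · have hzero : L (2 * k + 1) = 0 := by
        rw [hL]
        simp only [Finset.card_eq_zero]
        apply Finset.filter_eq_empty_iff.mpr
        intro A hA
        have := hcardmem A hA
        omega
      rw [hzero]
      simp only [Nat.cast_zero, hO]
      positivity
  -- sum the bounds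
  have htotal : (F₀.card : ℝ) ≤ (∑ k ∈ Finset.range (n + 1), E k) +
      (∑ k ∈ Finset.range (n + 1), O k) := by
    rw [hsplit]
    push_cast
    rw [← Finset.sum_add_distrib]
    apply Finset.sum_le_sum
    intro k hk
    exact add_le_add (hEbound k) (hObound k)
  -- bound the E-sum
  have hEsum : (∑ k ∈ Finset.range (n + 1), E k) ≤ 2 + 4 * Real.sqrt ((n : ℝ) / 2) * (5 / 4) ^ n := by
    rw [Finset.sum_range_succ']
    have hE0 : E 0 = 2 := by rw [hE]; simp
    rw [hE0]
    have hterm : ∀ i, E (i + 1) = 4 * Real.sqrt ((n : ℝ) / 2) * ((n.choose (i + 1) : ℝ) * (1 / 4) ^ (i + 1)) := by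
      intro i; rw [hE]; simp only [if_neg (Nat.succ_ne_zero i)]; ring
    rw [Finset.sum_congr rfl (fun i _ => hterm i), ← Finset.mul_sum]
    have hle : ∑ i ∈ Finset.range n, ((n.choose (i + 1) : ℝ) * (1 / 4) ^ (i + 1)) ≤ (5 / 4) ^ n := by
      rw [← binom_sum n, Finset.sum_range_succ']
      have : (0 : ℝ) ≤ (n.choose 0 : ℝ) * (1 / 4) ^ 0 := by positivity
      linarith
    have hpos : (0 : ℝ) ≤ 4 * Real.sqrt ((n : ℝ) / 2) := by positivity
    nlinarith
  -- bound the O-sum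
  have hOsum : (∑ k ∈ Finset.range (n + 1), O k) ≤
      4 * Real.sqrt (((n : ℝ) + 1) / 2) * (5 / 4) ^ (n + 1) := by
    have hterm : ∀ k, O k = 4 * Real.sqrt (((n : ℝ) + 1) / 2) *
        (((n + 1).choose (k + 1) : ℝ) * (1 / 4) ^ (k + 1)) := by
      intro k; rw [hO]; ring
    rw [Finset.sum_congr rfl (fun k _ => hterm k), ← Finset.mul_sum]
    have hle : ∑ k ∈ Finset.range (n + 1), (((n + 1).choose (k + 1) : ℝ) * (1 / 4) ^ (k + 1)) ≤ (5 / 4) ^ (n + 1) := by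
      rw [← binom_sum (n + 1)]
      conv_rhs => rw [Finset.sum_range_succ']
      have : (0 : ℝ) ≤ ((n + 1).choose 0 : ℝ) * (1 / 4) ^ 0 := by positivity
      linarith
    have hpos : (0 : ℝ) ≤ 4 * Real.sqrt (((n : ℝ) + 1) / 2) := by positivity
    nlinarith
  -- final numeric estimate, n ≥ 2
  have hnR : (2 : ℝ) ≤ (n : ℝ) := by exact_mod_cast hn2'
  set p : ℝ := (5 / 4) ^ n with hp
  have hppos : (0 : ℝ) < p := by positivity
  have hplow : (25 / 16 : ℝ) ≤ p := by
    rw [hp]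
    calc (25 / 16 : ℝ) = (5 / 4) ^ 2 := by norm_num
      _ ≤ (5 / 4) ^ n := pow_le_pow_right₀ (by norm_num) hn2'
  have hsn : (0 : ℝ) ≤ Real.sqrt n := Real.sqrt_nonneg _
  have hs2 : (1414 / 1000 : ℝ) ≤ Real.sqrt 2 :=
    (Real.le_sqrt (by norm_num) (by norm_num)).mpr (by norm_num)
  have hsrtn : Real.sqrt 2 ≤ Real.sqrt n := Real.sqrt_le_sqrt hnR
  -- 4 * sqrt(n/2) ≤ 2.83 * sqrt n
  have hA : 4 * Real.sqrt ((n : ℝ) / 2) ≤ (283 / 100) * Real.sqrt n := by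
    apply le_of_pow_le_pow_left₀ two_ne_zero (by positivity)
    have e1 : (4 * Real.sqrt ((n : ℝ) / 2)) ^ 2 = 16 * ((n : ℝ) / 2) := by
      rw [mul_pow, Real.sq_sqrt (by positivity : (0:ℝ) ≤ (n : ℝ) / 2)]; norm_num
    have e2 : ((283 / 100 : ℝ) * Real.sqrt n) ^ 2 = (283 / 100) ^ 2 * (n : ℝ) := by
      rw [mul_pow, Real.sq_sqrt (by positivity : (0:ℝ) ≤ (n : ℝ))]
    rw [e1, e2]
    nlinarith
  have hB : Real.sqrt (((n : ℝ) + 1) / 2) ≤ Real.sqrt n :=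
    Real.sqrt_le_sqrt (by linarith)
  have hX : (22 / 10 : ℝ) ≤ Real.sqrt n * p := by
    nlinarith [mul_le_mul hsrtn hplow (by norm_num) hsn]
  calc (F₀.card : ℝ) ≤ _ := htotal
    _ ≤ (2 + 4 * Real.sqrt ((n : ℝ) / 2) * p) + 4 * Real.sqrt (((n : ℝ) + 1) / 2) * ((5 / 4) ^ (n + 1)) := by
        exact add_le_add hEsum hOsum
    _ ≤ (2 + (283 / 100) * Real.sqrt n * p) + 5 * (Real.sqrt n * p) := by
        have h1 : 4 * Real.sqrt ((n : ℝ) / 2) * p ≤ (283 / 100) * Real.sqrt n * p :=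
          mul_le_mul_of_nonneg_right hA hppos.le
        have h2 : 4 * Real.sqrt (((n : ℝ) + 1) / 2) * ((5 / 4) ^ (n + 1)) ≤ 5 * (Real.sqrt n * p) := by
          rw [show (5 / 4 : ℝ) ^ (n + 1) = p * (5 / 4) by rw [hp, pow_succ]]
          have : 4 * Real.sqrt (((n : ℝ) + 1) / 2) * (p * (5 / 4)) = 5 * (Real.sqrt (((n : ℝ) + 1) / 2) * p) := by ring
          rw [this]
          have := mul_le_mul_of_nonneg_right hB hppos.le
          nlinarith
        linarith
    _ < 9 * Real.sqrt n * p := by nlinarith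
end

section
/- For all integers r ≥ 1 and t ≥ 0, binomial(r(t+2), r) > (1/(3√r)) · ((t+2)^{t+2}/(t+1)^{t+1})^r. -/
open Real Stirling

private lemma stirling_pos' (n : ℕ) (hn : 1 ≤ n) : 0 < stirlingSeq n := by
  obtain ⟨m, rfl⟩ : ∃ m, n = m + 1 := ⟨n - 1, by omega⟩
  exact stirlingSeq'_pos m

private lemma sqrt_pi_le_stirling (n : ℕ) (hn : 1 ≤ n) : Real.sqrt π ≤ stirlingSeq n := by
  obtain ⟨m, rfl⟩ : ∃ m, n = m + 1 := ⟨n - 1, by omega⟩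
  have h : Filter.Tendsto (stirlingSeq ∘ Nat.succ) Filter.atTop (nhds (Real.sqrt π)) :=
    tendsto_stirlingSeq_sqrt_pi.comp (Filter.tendsto_add_atTop_nat 1)
  exact stirlingSeq'_antitone.le_of_tendsto h m

private lemma stirling_le (n : ℕ) (hn : 1 ≤ n) :
    stirlingSeq n ≤ Real.exp 1 / Real.sqrt 2 := by
  obtain ⟨m, rfl⟩ : ∃ m, n = m + 1 := ⟨n - 1, by omega⟩
  have h := stirlingSeq'_antitone (Nat.zero_le m)
  simpa [stirlingSeq_one] using h

private lemma factorial_eq (n : ℕ) (hn : 1 ≤ n) :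
    ((Nat.factorial n : ℕ) : ℝ) =
      stirlingSeq n * (Real.sqrt (2 * n) * ((n : ℝ) / Real.exp 1) ^ n) := by
  have h0 : (0 : ℝ) < Real.sqrt (2 * n) * ((n : ℝ) / Real.exp 1) ^ n := by
    have : (0:ℝ) < n := by exact_mod_cast hn
    positivity
  rw [stirlingSeq]
  field_simp

set_option maxHeartbeats 1000000 in
/-- for all integers `r ≥ 1` and `t ≥ 0`,
`binom(r(t+2), r) > (1/(3√r)) ((t+2)^{t+2}/(t+1)^{t+1})^r`. -/
theorem choose_gt (r t : ℕ) (hr : 1 ≤ r) :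
    (1 / (3 * Real.sqrt r)) *
        (((t : ℝ) + 2) ^ (t + 2) / ((t : ℝ) + 1) ^ (t + 1)) ^ r <
      ((r * (t + 2)).choose r : ℝ) := by
  set n : ℕ := r * (t + 2) with hn
  set k : ℕ := r * (t + 1) with hk
  have hkr : 1 ≤ k := Nat.one_le_iff_ne_zero.mpr (by positivity)
  have hnr : 1 ≤ n := Nat.one_le_iff_ne_zero.mpr (by positivity)
  have hrn : r ≤ n := by rw [hn]; exact Nat.le_mul_of_pos_right r (by omega)
  have hsub : n - r = k := by rw [hn, hk, Nat.mul_add, Nat.mul_add]; omega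
  have hkn : k ≤ n := by omega
  -- abbreviations
  set a : ℝ := (((t : ℝ) + 2) ^ (t + 2) / ((t : ℝ) + 1) ^ (t + 1)) with ha
  have ht1 : (0:ℝ) < (t : ℝ) + 1 := by positivity
  have ht2 : (0:ℝ) < (t : ℝ) + 2 := by positivity
  have hapos : (0:ℝ) < a := by rw [ha]; positivity
  have he : (0:ℝ) < Real.exp 1 := Real.exp_pos 1
  have hrR : (0:ℝ) < (r:ℝ) := by exact_mod_cast hr
  have hkR : (0:ℝ) < (k:ℝ) := by exact_mod_cast hkr
  have hnR : (0:ℝ) < (n:ℝ) := by exact_mod_cast hnr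
  -- key power identity
  have hnc : (n:ℝ) = (r:ℝ) * ((t:ℝ) + 2) := by rw [hn]; push_cast; ring
  have hkc : (k:ℝ) = (r:ℝ) * ((t:ℝ) + 1) := by rw [hk]; push_cast; ring
  have hnrk : n = r + k := by rw [hn, hk]; ring
  have h1 : ((n:ℝ) / Real.exp 1) = ((t:ℝ) + 2) * ((r:ℝ) / Real.exp 1) := by
    rw [hnc]; ring
  have h2 : ((n:ℝ) / Real.exp 1) =
      (((t:ℝ) + 2) / ((t:ℝ) + 1)) * ((k:ℝ) / Real.exp 1) := by
    rw [hnc, hkc]; field_simp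
  have ha' : a ^ r = (((t:ℝ) + 2)) ^ r * ((((t:ℝ) + 2) / ((t:ℝ) + 1))) ^ k := by
    rw [ha, div_pow, div_pow, ← pow_mul, ← pow_mul, hk,
      show (t+2)*r = r + r*(t+1) from by ring, show (t+1)*r = r*(t+1) from by ring,
      pow_add, mul_div_assoc]
  have key : ((n:ℝ) / Real.exp 1) ^ n =
      a ^ r * (((r:ℝ) / Real.exp 1) ^ r * ((k:ℝ) / Real.exp 1) ^ k) := by
    calc ((n:ℝ) / Real.exp 1) ^ n
        = ((n:ℝ) / Real.exp 1) ^ r * ((n:ℝ) / Real.exp 1) ^ k := by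
          rw [hnrk, pow_add]
      _ = (((t:ℝ) + 2) * ((r:ℝ) / Real.exp 1)) ^ r *
            ((((t:ℝ) + 2) / ((t:ℝ) + 1)) * ((k:ℝ) / Real.exp 1)) ^ k := by
          nth_rewrite 1 [h1]; rw [h2]
      _ = a ^ r * (((r:ℝ) / Real.exp 1) ^ r * ((k:ℝ) / Real.exp 1) ^ k) := by
          rw [mul_pow, mul_pow, ha']; ring
  -- Stirling pieces
  set A := stirlingSeq n with hA
  set B := stirlingSeq r with hB
  set C := stirlingSeq k with hC
  have hApos : 0 < A := stirling_pos' n hnr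
  have hBpos : 0 < B := stirling_pos' r hr
  have hCpos : 0 < C := stirling_pos' k hkr
  have hAlb : Real.sqrt π ≤ A := sqrt_pi_le_stirling n hnr
  have hBub : B ≤ Real.exp 1 / Real.sqrt 2 := stirling_le r hr
  have hCub : C ≤ Real.exp 1 / Real.sqrt 2 := stirling_le k hkr
  -- choose as a formula
  have hch : ((n.choose r : ℕ) : ℝ) =
      A * (Real.sqrt (2 * n) * ((n:ℝ) / Real.exp 1) ^ n) /
        ((B * (Real.sqrt (2 * r) * ((r:ℝ) / Real.exp 1) ^ r)) *
         (C * (Real.sqrt (2 * k) * ((k:ℝ) / Real.exp 1) ^ k))) := by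
    rw [Nat.cast_choose ℝ hrn, hsub, factorial_eq _ hnr, factorial_eq _ hr,
      factorial_eq _ hkr]
  rw [hch, key]
  -- positive denominators
  have hs2r : (0:ℝ) < Real.sqrt (2 * r) := Real.sqrt_pos.mpr (by positivity)
  have hs2k : (0:ℝ) < Real.sqrt (2 * k) := Real.sqrt_pos.mpr (by positivity)
  have hs2n : (0:ℝ) < Real.sqrt (2 * n) := Real.sqrt_pos.mpr (by positivity)
  have hsr : (0:ℝ) < Real.sqrt r := Real.sqrt_pos.mpr hrR
  have hden : (0:ℝ) < (B * (Real.sqrt (2 * r) * ((r:ℝ) / Real.exp 1) ^ r)) *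
      (C * (Real.sqrt (2 * k) * ((k:ℝ) / Real.exp 1) ^ k)) := by positivity
  rw [lt_div_iff₀ hden]
  -- reduce to clean inequality
  have goal2 : (1 / (3 * Real.sqrt r)) * (B * C * (Real.sqrt (2 * r) * Real.sqrt (2 * k)))
      < A * Real.sqrt (2 * n) := by
    have hs2 : (0:ℝ) < Real.sqrt 2 := Real.sqrt_pos.mpr (by norm_num)
    have hBC : B * C ≤ (Real.exp 1 / Real.sqrt 2) * (Real.exp 1 / Real.sqrt 2) :=
      mul_le_mul hBub hCub hCpos.le (by positivity)
    have hsplit : Real.sqrt (2 * r) = Real.sqrt 2 * Real.sqrt r :=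
      Real.sqrt_mul (by norm_num) _
    have hknn : Real.sqrt (2 * k) ≤ Real.sqrt (2 * n) := by
      apply Real.sqrt_le_sqrt
      have : (k:ℝ) ≤ (n:ℝ) := by exact_mod_cast hkn
      nlinarith
    have hnum : Real.exp 1 ^ 2 * Real.sqrt 2 / 6 < Real.sqrt π := by
      have hs2sq : (Real.sqrt 2) ^ 2 = 2 := Real.sq_sqrt (by norm_num)
      rw [Real.lt_sqrt (by positivity)]
      have hx : (Real.exp 1 ^ 2 * Real.sqrt 2 / 6) ^ 2 = Real.exp 1 ^ 4 * 2 / 36 := by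
        rw [div_pow, mul_pow, hs2sq]; ring
      rw [hx]
      have hexp : Real.exp 1 < 2.7182818286 := Real.exp_one_lt_d9
      have hpi : 3.141592 < π := Real.pi_gt_d6
      have h1 : Real.exp 1 ^ 2 < 2.7182818286 ^ 2 := by
        nlinarith [Real.exp_pos 1]
      have h2 : Real.exp 1 ^ 4 < 2.7182818286 ^ 4 := by
        nlinarith [pow_pos (Real.exp_pos 1) 2, sq_nonneg (Real.exp 1 ^ 2)]
      nlinarith [h2]
    calc (1 / (3 * Real.sqrt r)) * (B * C * (Real.sqrt (2 * r) * Real.sqrt (2 * k)))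
        ≤ (1 / (3 * Real.sqrt r)) * ((Real.exp 1 / Real.sqrt 2) * (Real.exp 1 / Real.sqrt 2)
            * (Real.sqrt (2 * r) * Real.sqrt (2 * k))) := by
          apply mul_le_mul_of_nonneg_left _ (by positivity)
          exact mul_le_mul_of_nonneg_right hBC (by positivity)
      _ = (Real.exp 1 ^ 2 * Real.sqrt 2 / 6) * Real.sqrt (2 * k) := by
          rw [hsplit, div_mul_div_comm, Real.mul_self_sqrt (by norm_num : (0:ℝ) ≤ 2)]
          have hsr' : Real.sqrt r ≠ 0 := hsr.ne'
          field_simp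
          ring
      _ < Real.sqrt π * Real.sqrt (2 * k) := mul_lt_mul_of_pos_right hnum hs2k
      _ ≤ A * Real.sqrt (2 * n) := mul_le_mul hAlb hknn hs2k.le hApos.le
  calc (1 / (3 * Real.sqrt r)) * a ^ r *
        ((B * (Real.sqrt (2 * r) * ((r:ℝ) / Real.exp 1) ^ r)) *
         (C * (Real.sqrt (2 * k) * ((k:ℝ) / Real.exp 1) ^ k)))
      = ((1 / (3 * Real.sqrt r)) * (B * C * (Real.sqrt (2 * r) * Real.sqrt (2 * k)))) *
        (a ^ r * (((r:ℝ) / Real.exp 1) ^ r * ((k:ℝ) / Real.exp 1) ^ k)) := by ring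
    _ < (A * Real.sqrt (2 * n)) *
        (a ^ r * (((r:ℝ) / Real.exp 1) ^ r * ((k:ℝ) / Real.exp 1) ^ k)) := by
        apply mul_lt_mul_of_pos_right goal2 (by positivity)
    _ = A * (Real.sqrt (2 * n) *
        (a ^ r * (((r:ℝ) / Real.exp 1) ^ r * ((k:ℝ) / Real.exp 1) ^ k))) := by ring
end

section
/- Erdős–Kleitman lemma: every r-uniform hypergraph F on a vertex set V contains an r-partite subhypergraph F* with |F*| ≥ (r!/r^r)·|F|. -/
open Finset Function

private def ekPart (V : Finset ℕ) (r : ℕ) (c : ↥V → Fin r) (i : Fin r) : Finset ℕ :=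
  (V.attach.filter (fun v => c v = i)).image Subtype.val

private lemma mem_ekPart {V : Finset ℕ} {r : ℕ} {c : ↥V → Fin r} {i : Fin r} {x : ℕ} :
    x ∈ ekPart V r c i ↔ ∃ h : x ∈ V, c ⟨x, h⟩ = i := by
  simp only [ekPart, mem_image, mem_filter, mem_attach, true_and, Subtype.exists]
  constructor
  · rintro ⟨a, ha, hc, rfl⟩; exact ⟨ha, hc⟩
  · rintro ⟨h, hc⟩; exact ⟨x, h, hc, rfl⟩

private lemma rainbow_iff {V : Finset ℕ} {r : ℕ} {E : Finset ℕ} (hEV : E ⊆ V)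
    (c : ↥V → Fin r) :
    (∀ i, (E ∩ ekPart V r c i).card = 1) ↔
      Function.Bijective (fun v : ↥E => c ⟨v.1, hEV v.2⟩) := by
  rw [Function.bijective_iff_existsUnique]
  apply forall_congr'
  intro i
  set g : ↥E → Fin r := fun v => c ⟨v.1, hEV v.2⟩ with hg
  have h1 : E ∩ ekPart V r c i = (E.attach.filter (fun v => g v = i)).image Subtype.val := by
    ext x
    simp only [mem_inter, mem_ekPart, mem_image, mem_filter, mem_attach, true_and,
      Subtype.exists, hg]
    constructor
    · rintro ⟨hxE, hxV, hc⟩; exact ⟨x, hxE, hc, rfl⟩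
    · rintro ⟨a, ha, hc, rfl⟩; exact ⟨ha, hEV ha, hc⟩
  rw [h1, Finset.card_image_of_injective _ Subtype.val_injective]
  have h2 : (E.attach.filter (fun v => g v = i)).card = Fintype.card {v : ↥E // g v = i} := by
    rw [Fintype.card_subtype, univ_eq_attach]
  rw [h2, Fintype.card_eq_one_iff]
  constructor
  · rintro ⟨⟨a, ha⟩, hu⟩
    exact ⟨a, ha, fun y hy => congrArg Subtype.val (hu ⟨y, hy⟩)⟩
  · rintro ⟨a, ha, hu⟩
    exact ⟨⟨a, ha⟩, fun y => Subtype.ext (hu y.1 y.2)⟩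

private noncomputable def ekEquiv {V : Finset ℕ} {r : ℕ} {E : Finset ℕ} (hEV : E ⊆ V) :
    {c : ↥V → Fin r // ∀ i, (E ∩ ekPart V r c i).card = 1} ≃
      ((↥E ≃ Fin r) × (↥(V \ E) → Fin r)) where
  toFun c := (Equiv.ofBijective _ ((rainbow_iff hEV c.1).mp c.2),
              fun v => c.1 ⟨v.1, (sdiff_subset) v.2⟩)
  invFun p := ⟨fun v => if h : v.1 ∈ E then p.1 ⟨v.1, h⟩
                        else p.2 ⟨v.1, mem_sdiff.mpr ⟨v.2, h⟩⟩,
    (rainbow_iff hEV _).mpr (by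
      have : (fun v : ↥E =>
          if h : v.1 ∈ E then p.1 ⟨v.1, h⟩
          else p.2 ⟨v.1, mem_sdiff.mpr ⟨hEV v.2, h⟩⟩) = ⇑p.1 := by
        funext v; rw [dif_pos v.2]
      rw [this]
      exact p.1.bijective)⟩
  left_inv c := Subtype.ext (funext fun v => by
    dsimp only
    split <;> rfl)
  right_inv p := by
    refine Prod.ext (Equiv.ext fun v => ?_) (funext fun v => ?_)
    · simp only [Equiv.ofBijective_apply]
      rw [dif_pos v.2]
    · dsimp only
      rw [dif_neg (mem_sdiff.mp v.2).2]

private lemma ek_count {V : Finset ℕ} {r : ℕ} {E : Finset ℕ} (hEV : E ⊆ V)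
    (hEr : E.card = r) :
    (Finset.univ.filter
        (fun c : ↥V → Fin r => ∀ i, (E ∩ ekPart V r c i).card = 1)).card
      = r.factorial * r ^ (V.card - r) := by
  classical
  rw [← Fintype.card_subtype, Fintype.card_congr (ekEquiv hEV), Fintype.card_prod,
    Fintype.card_fun, Fintype.card_coe, Fintype.card_fin, card_sdiff_of_subset hEV, hEr,
    Fintype.card_equiv (Fintype.equivFinOfCardEq (by rw [Fintype.card_coe, hEr])),
    Fintype.card_coe, hEr]

/-- Erdős–Kleitman: every `r`-uniform hypergraph `F` on a vertex set `V`
contains an `r`-partite subhypergraph `F*` with `|F*| ≥ (r!/r^r)|F|`, i.e. there is a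
partition `V = V1 ∪ … ∪ Vr` such that every edge of `F*` meets each part exactly once
and `r! * |F| ≤ r^r * |F*|`. -/
theorem erdos_kleitman (r : ℕ) (hr : 1 ≤ r) (V : Finset ℕ) (F : Finset (Finset ℕ))
    (hF : ∀ E ∈ F, E ⊆ V ∧ E.card = r) :
    ∃ F' ⊆ F, ∃ P : Fin r → Finset ℕ,
      (∀ i j, i ≠ j → Disjoint (P i) (P j)) ∧
      Finset.univ.biUnion P = V ∧
      (∀ E ∈ F', ∀ i, (E ∩ P i).card = 1) ∧
      r.factorial * F.card ≤ r ^ r * F'.card := by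
  classical
  rcases F.eq_empty_or_nonempty with hFe | ⟨E0, hE0⟩
  · refine ⟨∅, empty_subset _, fun i => if i = ⟨0, hr⟩ then V else ∅, ?_, ?_, ?_, ?_⟩
    · intro i j hij
      by_cases hi : i = ⟨0, hr⟩ <;> by_cases hj : j = ⟨0, hr⟩ <;>
        simp [hi, hj] at hij ⊢
    · ext x
      simp only [mem_biUnion, mem_univ, true_and]
      constructor
      · rintro ⟨i, hi⟩
        split at hi
        · exact hi
        · simp at hi
      · intro hx; exact ⟨⟨0, hr⟩, by simp [hx]⟩
    · simp
    · simp [hFe]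
  · have hVr : r ≤ V.card := by
      rw [← (hF E0 hE0).2]; exact card_le_card (hF E0 hE0).1
    set N := r ^ (V.card - r) with hN
    clear_value N
    have hNpos : 0 < N := by rw [hN]; exact Nat.pow_pos hr
    have key : ∑ c : ↥V → Fin r,
        (F.filter (fun E => ∀ i, (E ∩ ekPart V r c i).card = 1)).card
        = F.card * (r.factorial * N) := by
      have h1 : ∀ c : ↥V → Fin r,
          (F.filter (fun E => ∀ i, (E ∩ ekPart V r c i).card = 1)).card
            = ∑ E ∈ F, if (∀ i, (E ∩ ekPart V r c i).card = 1) then 1 else 0 := by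
        intro c; rw [Finset.card_filter]
      simp only [h1]
      rw [Finset.sum_comm]
      rw [Finset.sum_congr rfl (fun E hE => ?_), Finset.sum_const, smul_eq_mul]
      rw [← Finset.card_filter]
      rw [hN]
      exact ek_count (hF E hE).1 (hF E hE).2
    have hcard : Fintype.card (↥V → Fin r) = r ^ r * N := by
      rw [Fintype.card_fun, Fintype.card_fin, Fintype.card_coe, hN, ← pow_add,
        Nat.add_sub_cancel' hVr]
    haveI : Nonempty (↥V → Fin r) := ⟨fun _ => ⟨0, hr⟩⟩
    obtain ⟨c, -, hc⟩ := Finset.exists_le_of_sum_le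
      (s := (Finset.univ : Finset (↥V → Fin r)))
      (f := fun _ => r.factorial * F.card * N)
      (g := fun c => (r ^ r *
        (F.filter (fun E => ∀ i, (E ∩ ekPart V r c i).card = 1)).card) * N)
      (Finset.univ_nonempty (α := ↥V → Fin r))
      (by
        rw [Finset.sum_const, Finset.card_univ, hcard, smul_eq_mul, ← Finset.sum_mul,
          ← Finset.mul_sum, key]
        ring_nf
        rfl)
    refine ⟨F.filter (fun E => ∀ i, (E ∩ ekPart V r c i).card = 1), filter_subset _ _,
      ekPart V r c, ?_, ?_, ?_, ?_⟩
    · intro i j hij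
      rw [Finset.disjoint_left]
      intro x hxi hxj
      rw [mem_ekPart] at hxi hxj
      obtain ⟨h, hci⟩ := hxi
      obtain ⟨h', hcj⟩ := hxj
      exact hij (hci ▸ hcj ▸ rfl)
    · ext x
      simp only [mem_biUnion, mem_univ, true_and, mem_ekPart]
      constructor
      · rintro ⟨i, h, -⟩; exact h
      · intro hx; exact ⟨c ⟨x, hx⟩, hx, rfl⟩
    · intro E hE
      exact (Finset.mem_filter.mp hE).2
    · exact Nat.le_of_mul_le_mul_right hc hNpos
end

section
/- Let q be a prime power, k ≥ 3, and let S ⊆ F_q with |S| = 2k such that for every partition S = X ∪ Y ∪ W with 1 ≤ |X|,|Y|,|W| < k the polynomials p_X, p_Y, p_W (with p_Z(x) = ∏_{z∈Z}(x−z)) are (k−|X|, k−|Y|, k−|W|)-independent. Then the family F = {F(p) : p polynomial over F_q of degree < k}, where F(p) = {(s, p(s)) : s ∈ S} ⊆ S × F_q, is a 2k-uniform 2-cancellative family of size q^k. -/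
open Polynomial

lemma quot_exists {Fq : Type*} [Field Fq] [DecidableEq Fq] {k : ℕ} (T : Finset Fq)
    (p : Fq[X]) (hp : p ≠ 0) (hdeg : p.degree < ((k : ℕ) : WithBot ℕ))
    (h : ∀ z ∈ T, p.eval z = 0) :
    ∃ f : Fq[X], p = f * ∏ z ∈ T, (X - C z) ∧ f.degree < ((k - T.card : ℕ) : WithBot ℕ) := by
  have hroots : T.val ≤ p.roots := by
    refine Multiset.le_iff_count.mpr fun a => ?_
    by_cases ha : a ∈ T
    · calc Multiset.count a T.val ≤ 1 := Multiset.nodup_iff_count_le_one.mp T.nodup a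
        _ ≤ Multiset.count a p.roots := Multiset.one_le_count_iff_mem.mpr
            ((mem_roots hp).mpr (h a ha))
    · simp [Multiset.count_eq_zero_of_notMem, ha]
  have hdvd : (∏ z ∈ T, (X - C z)) ∣ p := by
    rw [Finset.prod_eq_multiset_prod]
    exact (Multiset.prod_X_sub_C_dvd_iff_le_roots hp _).mpr hroots
  obtain ⟨f, hf⟩ := hdvd
  have hprodne : (∏ z ∈ T, (X - C z)) ≠ 0 :=
    (monic_prod_of_monic _ _ fun z _ => monic_X_sub_C z).ne_zero
  have hfne : f ≠ 0 := by rintro rfl; rw [mul_zero] at hf; exact hp hf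
  have hnd : (∏ z ∈ T, (X - C z)).natDegree = T.card := by
    rw [natDegree_prod _ _ fun z _ => X_sub_C_ne_zero z]
    simp [natDegree_X_sub_C]
  have hpk : p.natDegree < k := (natDegree_lt_iff_degree_lt hp).mpr hdeg
  have hm : p.natDegree = T.card + f.natDegree := by
    rw [hf, natDegree_mul hprodne hfne, hnd]
  refine ⟨f, by rw [hf, mul_comm], ?_⟩
  rw [degree_eq_natDegree hfne]
  exact_mod_cast (by omega : f.natDegree < k - T.card)

/-- if `S ⊆ F_q` has `2k` elements such that for every partition
`S = X ∪ Y ∪ W` into parts of sizes between `1` and `k-1` the polynomials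
`p_X, p_Y, p_W` are `(k-|X|, k-|Y|, k-|W|)`-independent, then the family of graphs
`F(p) = {(s, p(s)) : s ∈ S}` of polynomials `p` of degree `< k` is a `2k`-uniform
2-cancellative family of size `q^k`. -/
theorem algebraic_construction (Fq : Type*) [Field Fq] [Fintype Fq] [DecidableEq Fq]
    (k : ℕ) (hk : 3 ≤ k) (S : Finset Fq) (hS : S.card = 2 * k)
    (hindep : ∀ X Y W : Finset Fq,
      Disjoint X Y → Disjoint X W → Disjoint Y W → X ∪ Y ∪ W = S →
      1 ≤ X.card → X.card < k → 1 ≤ Y.card → Y.card < k → 1 ≤ W.card → W.card < k →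
      ∀ f1 f2 f3 : Fq[X],
        f1.degree < ((k - X.card : ℕ) : WithBot ℕ) →
        f2.degree < ((k - Y.card : ℕ) : WithBot ℕ) →
        f3.degree < ((k - W.card : ℕ) : WithBot ℕ) →
        f1 * (∏ z ∈ X, (Polynomial.X - Polynomial.C z)) +
          f2 * (∏ z ∈ Y, (Polynomial.X - Polynomial.C z)) +
          f3 * (∏ z ∈ W, (Polynomial.X - Polynomial.C z)) = 0 →
        f1 = 0 ∧ f2 = 0 ∧ f3 = 0) :
    let Fam : Set (Finset (Fq × Fq)) :=
      {A | ∃ p : Fq[X], p.degree < ((k : ℕ) : WithBot ℕ) ∧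
        A = S.image (fun s => (s, p.eval s))}
    (∀ A ∈ Fam, A.card = 2 * k) ∧
    (∀ A1 ∈ Fam, ∀ A2 ∈ Fam, ∀ B ∈ Fam, ∀ C ∈ Fam,
      A1 ≠ A2 → A1 ≠ B → A1 ≠ C → A2 ≠ B → A2 ≠ C →
      A1 ∪ A2 ∪ B = A1 ∪ A2 ∪ C → B = C) ∧
    Fam.ncard = Fintype.card Fq ^ k := by
  intro Fam
  -- basic facts
  have hinj : ∀ p : Fq[X], Function.Injective (fun s : Fq => (s, p.eval s)) := by
    intro p a b hab
    exact (Prod.ext_iff.mp hab).1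
  -- graphs determine polynomials
  have key : ∀ p p' : Fq[X], p.degree < ((k : ℕ) : WithBot ℕ) →
      p'.degree < ((k : ℕ) : WithBot ℕ) →
      S.image (fun s => (s, p.eval s)) = S.image (fun s => (s, p'.eval s)) → p = p' := by
    intro p p' hp hp' himg
    have heval : ∀ s ∈ S, p.eval s = p'.eval s := by
      intro s hs
      have : (s, p.eval s) ∈ S.image (fun t => (t, p'.eval t)) := by
        rw [← himg]; exact Finset.mem_image_of_mem _ hs
      obtain ⟨t, _, hts⟩ := Finset.mem_image.mp this
      have h1 : t = s := congrArg Prod.fst hts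
      subst h1
      exact (congrArg Prod.snd hts).symm
    have hcast : ((k : ℕ) : WithBot ℕ) ≤ (S.card : WithBot ℕ) := by
      rw [hS]; exact_mod_cast (by omega : k ≤ 2 * k)
    exact eq_of_degrees_lt_of_eval_finset_eq S (lt_of_lt_of_le hp hcast)
      (lt_of_lt_of_le hp' hcast) heval
  have hmem : ∀ (p p' : Fq[X]) (s : Fq),
      (s, p.eval s) ∈ S.image (fun t => (t, p'.eval t)) → p.eval s = p'.eval s := by
    intro p p' s h
    obtain ⟨t, _, hts⟩ := Finset.mem_image.mp h
    have h1 : t = s := congrArg Prod.fst hts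
    subst h1
    exact (congrArg Prod.snd hts).symm
  refine ⟨?_, ?_, ?_⟩
  · rintro A ⟨p, hp, rfl⟩
    rw [Finset.card_image_of_injective _ (hinj p), hS]
  · rintro A1 ⟨p1, hp1, rfl⟩ A2 ⟨p2, hp2, rfl⟩ B ⟨pB, hpB, rfl⟩ C ⟨pC, hpC, rfl⟩
      h12 h1B h1C h2B h2C hun
    by_contra hBC
    have hpBC : pB ≠ pC := fun h => hBC (by rw [h])
    have hp1B : p1 ≠ pB := fun h => h1B (by rw [h])
    have hp2B : p2 ≠ pB := fun h => h2B (by rw [h])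
    have hBmem : ∀ s ∈ S, pB.eval s = p1.eval s ∨ pB.eval s = p2.eval s ∨
        pB.eval s = pC.eval s := by
      intro s hs
      have h1 : (s, pB.eval s) ∈ S.image (fun t => (t, p1.eval t)) ∪
          S.image (fun t => (t, p2.eval t)) ∪ S.image (fun t => (t, pC.eval t)) := by
        rw [← hun]
        exact Finset.mem_union_right _ (Finset.mem_image_of_mem _ hs)
      rcases Finset.mem_union.mp h1 with h2 | h2
      · rcases Finset.mem_union.mp h2 with h3 | h3
        · exact Or.inl (hmem _ _ _ h3)
        · exact Or.inr (Or.inl (hmem _ _ _ h3))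
      · exact Or.inr (Or.inr (hmem _ _ _ h2))
    have hCmem : ∀ s ∈ S, pC.eval s = p1.eval s ∨ pC.eval s = p2.eval s ∨
        pC.eval s = pB.eval s := by
      intro s hs
      have h1 : (s, pC.eval s) ∈ S.image (fun t => (t, p1.eval t)) ∪
          S.image (fun t => (t, p2.eval t)) ∪ S.image (fun t => (t, pB.eval t)) := by
        rw [hun]
        exact Finset.mem_union_right _ (Finset.mem_image_of_mem _ hs)
      rcases Finset.mem_union.mp h1 with h2 | h2
      · rcases Finset.mem_union.mp h2 with h3 | h3
        · exact Or.inl (hmem _ _ _ h3)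
        · exact Or.inr (Or.inl (hmem _ _ _ h3))
      · exact Or.inr (Or.inr (hmem _ _ _ h2))
    set Xs := S.filter (fun s => pB.eval s ≠ pC.eval s ∧ pB.eval s = p1.eval s) with hXs
    set Ys := S.filter (fun s => pB.eval s ≠ pC.eval s ∧ pB.eval s ≠ p1.eval s) with hYs
    set Ws := S.filter (fun s => pB.eval s = pC.eval s) with hWs
    have hdXY : Disjoint Xs Ys := by
      rw [Finset.disjoint_left]
      intro a ha hb
      simp only [hXs, hYs, Finset.mem_filter] at ha hb
      exact hb.2.2 ha.2.2
    have hdXW : Disjoint Xs Ws := by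
      rw [Finset.disjoint_left]
      intro a ha hb
      simp only [hXs, hWs, Finset.mem_filter] at ha hb
      exact ha.2.1 hb.2
    have hdYW : Disjoint Ys Ws := by
      rw [Finset.disjoint_left]
      intro a ha hb
      simp only [hYs, hWs, Finset.mem_filter] at ha hb
      exact ha.2.1 hb.2
    have hUnion : Xs ∪ Ys ∪ Ws = S := by
      ext a
      simp only [Finset.mem_union, hXs, hYs, hWs, Finset.mem_filter]
      constructor
      · rintro ((h | h) | h) <;> exact h.1
      · intro ha
        by_cases h1 : pB.eval a = pC.eval a
        · exact Or.inr ⟨ha, h1⟩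
        · by_cases h2 : pB.eval a = p1.eval a
          · exact Or.inl (Or.inl ⟨ha, h1, h2⟩)
          · exact Or.inl (Or.inr ⟨ha, h1, h2⟩)
    have hsum : Xs.card + Ys.card + Ws.card = 2 * k := by
      rw [← hS, ← hUnion, Finset.card_union_of_disjoint (Finset.disjoint_union_left.mpr ⟨hdXW, hdYW⟩),
        Finset.card_union_of_disjoint hdXY]
    -- on Ys, pB = p2
    have hYp2 : ∀ s ∈ Ys, pB.eval s = p2.eval s := by
      intro s hs
      simp only [hYs, Finset.mem_filter] at hs
      rcases hBmem s hs.1 with h | h | h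
      · exact absurd h hs.2.2
      · exact h
      · exact absurd h hs.2.1
    -- on Xs, pC = p2 ; on Ys, pC = p1
    have hXpC : ∀ s ∈ Xs, pC.eval s = p2.eval s := by
      intro s hs
      simp only [hXs, Finset.mem_filter] at hs
      rcases hCmem s hs.1 with h | h | h
      · exact absurd (hs.2.2.trans h.symm) hs.2.1
      · exact h
      · exact absurd h.symm hs.2.1
    have hYpC : ∀ s ∈ Ys, pC.eval s = p1.eval s := by
      intro s hs
      have h2 := hYp2 s hs
      simp only [hYs, Finset.mem_filter] at hs
      rcases hCmem s hs.1 with h | h | h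
      · exact h
      · exact absurd (h2.trans h.symm) hs.2.1
      · exact absurd h.symm hs.2.1
    -- cardinality bounds
    have hsub : ∀ p p' : Fq[X], p.degree < ((k : ℕ) : WithBot ℕ) →
        p'.degree < ((k : ℕ) : WithBot ℕ) → (p - p').degree < ((k : ℕ) : WithBot ℕ) :=
      fun p p' h h' => lt_of_le_of_lt (degree_sub_le _ _) (max_lt h h')
    have hWlt : Ws.card < k := by
      by_contra h
      push_neg at h
      apply hpBC
      rw [← sub_eq_zero]
      refine eq_zero_of_degree_lt_of_eval_finset_eq_zero Ws
        (lt_of_lt_of_le (hsub _ _ hpB hpC) (by exact_mod_cast h)) fun x hx => ?_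
      simp only [hWs, Finset.mem_filter] at hx
      simp [hx.2]
    have hXlt : Xs.card < k := by
      by_contra h
      push_neg at h
      apply hp1B
      rw [← sub_eq_zero]
      refine eq_zero_of_degree_lt_of_eval_finset_eq_zero Xs
        (lt_of_lt_of_le (hsub _ _ hp1 hpB) (by exact_mod_cast h)) fun x hx => ?_
      simp only [hXs, Finset.mem_filter] at hx
      simp [hx.2.2]
    have hYlt : Ys.card < k := by
      by_contra h
      push_neg at h
      apply hp2B
      rw [← sub_eq_zero]
      refine eq_zero_of_degree_lt_of_eval_finset_eq_zero Ys
        (lt_of_lt_of_le (hsub _ _ hp2 hpB) (by exact_mod_cast h)) fun x hx => ?_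
      simp [hYp2 x hx]
    -- a = p1 + p2 - pB - pC = 0
    have hXY : (Xs ∪ Ys).card = Xs.card + Ys.card := Finset.card_union_of_disjoint hdXY
    have ha : p1 + p2 - pB - pC = 0 := by
      refine eq_zero_of_degree_lt_of_eval_finset_eq_zero (Xs ∪ Ys) ?_ fun x hx => ?_
      · have hdle : (p1 + p2 - pB - pC).degree < ((k : ℕ) : WithBot ℕ) := by
          refine lt_of_le_of_lt (degree_sub_le _ _) (max_lt ?_ hpC)
          refine lt_of_le_of_lt (degree_sub_le _ _) (max_lt ?_ hpB)
          exact lt_of_le_of_lt (degree_add_le _ _) (max_lt hp1 hp2)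
        refine lt_of_lt_of_le hdle ?_
        rw [hXY]
        exact_mod_cast (by omega : k ≤ Xs.card + Ys.card)
      · rcases Finset.mem_union.mp hx with h | h
        · have h1 : pB.eval x = p1.eval x := by
            simp only [hXs, Finset.mem_filter] at h; exact h.2.2
          have h2 := hXpC x h
          simp [eval_sub, eval_add, h2, ← h1]
        · have h1 := hYp2 x h
          have h2 := hYpC x h
          simp [eval_sub, eval_add, h2, ← h1]
    -- divisibility
    obtain ⟨f1, hf1, hf1d⟩ := quot_exists (k := k) Xs (p1 - pB) (sub_ne_zero.mpr hp1B)
      (hsub _ _ hp1 hpB) (fun z hz => by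
        simp only [hXs, Finset.mem_filter] at hz
        simp [hz.2.2])
    obtain ⟨f2, hf2, hf2d⟩ := quot_exists (k := k) Ys (p2 - pB) (sub_ne_zero.mpr hp2B)
      (hsub _ _ hp2 hpB) (fun z hz => by simp [hYp2 z hz])
    obtain ⟨f3, hf3, hf3d⟩ := quot_exists (k := k) Ws (pC - pB)
      (sub_ne_zero.mpr fun h => hpBC h.symm)
      (hsub _ _ hpC hpB) (fun z hz => by
        simp only [hWs, Finset.mem_filter] at hz
        simp [hz.2])
    have hcomb : f1 * (∏ z ∈ Xs, (X - C z)) + f2 * (∏ z ∈ Ys, (X - C z)) +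
        (-f3) * (∏ z ∈ Ws, (X - C z)) = 0 := by
      linear_combination ha - hf1 - hf2 + hf3
    have hf3d' : (-f3).degree < ((k - Ws.card : ℕ) : WithBot ℕ) := by
      rwa [degree_neg]
    obtain ⟨_, _, h3⟩ := hindep Xs Ys Ws hdXY hdXW hdYW hUnion
      (by omega) hXlt (by omega) hYlt (by omega) hWlt f1 f2 (-f3) hf1d hf2d hf3d' hcomb
    have : f3 = 0 := by simpa using h3
    rw [this, zero_mul] at hf3
    exact hpBC (sub_eq_zero.mp hf3).symm
  · have hFam : Fam = (fun p : Fq[X] => S.image (fun s => (s, p.eval s))) ''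
        {p : Fq[X] | p.degree < ((k : ℕ) : WithBot ℕ)} := by
      ext A
      simp only [Fam, Set.mem_setOf_eq, Set.mem_image]
      constructor
      · rintro ⟨p, hp, rfl⟩; exact ⟨p, hp, rfl⟩
      · rintro ⟨p, hp, rfl⟩; exact ⟨p, hp, rfl⟩
    have hinjOn : Set.InjOn (fun p : Fq[X] => S.image (fun s => (s, p.eval s)))
        {p : Fq[X] | p.degree < ((k : ℕ) : WithBot ℕ)} :=
      fun p hp p' hp' h => key p p' hp hp' h
    rw [hFam, Set.ncard_image_of_injOn hinjOn]
    have hset : {p : Fq[X] | p.degree < ((k : ℕ) : WithBot ℕ)} =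
        (degreeLT Fq k : Submodule Fq Fq[X]) := by
      ext p; simp [mem_degreeLT]
    rw [hset, ← Nat.card_coe_set_eq]
    rw [Nat.card_congr ((Equiv.setCongr rfl).trans (degreeLTEquiv Fq k).toEquiv)]
    simp [Nat.card_eq_fintype_card]
end

section
/- c_3(n,2) ≤ n(n+1)/6 and c_4(n,2) ≤ n(n−1)/6 for all n, where c_r(n,2) is the maximum size of an r-uniform 2-cancellative family on n vertices. -/
/-- `c_r(n,2)`: maximum size of an `r`-uniform 2-cancellative family on `[n]`. -/
noncomputable def cUnifMax2 (n r : ℕ) : ℕ :=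
  sSup {m | ∃ F : Finset (Finset ℕ),
    (∀ A ∈ F, A ⊆ Finset.range n ∧ A.card = r) ∧ TwoCancellative F ∧ F.card = m}

open Finset

lemma lemma_star {F : Finset (Finset ℕ)} (h4 : 4 ≤ F.card)
    (hunif : ∀ A ∈ F, A.card = 4) (hc : TwoCancellative F)
    {A B T D E : Finset ℕ} (hA : A ∈ F) (hB : B ∈ F) (hAB : A ≠ B)
    (hTA : T ⊆ A) (hTB : T ⊆ B)
    (hD : D ∈ F) (hDA : D ≠ A) (hDsub : A \ T ⊆ D)
    (hE : E ∈ F) (hEB : E ≠ B) (hEsub : B \ T ⊆ E) : False := by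
  have hUeq : ∀ {U : Finset ℕ}, A \ T ⊆ U → B \ T ⊆ U → U ∪ A = U ∪ B := by
    intro U h1 h2
    have hsub : ∀ {X Y : Finset ℕ}, X \ T ⊆ U → T ⊆ Y → X ⊆ U ∪ Y := by
      intro X Y hXU hTY x hx
      by_cases hxT : x ∈ T
      · exact Finset.mem_union_right _ (hTY hxT)
      · exact Finset.mem_union_left _ (hXU (Finset.mem_sdiff.mpr ⟨hx, hxT⟩))
    exact Finset.Subset.antisymm
      (Finset.union_subset Finset.subset_union_left (hsub h1 hTB))
      (Finset.union_subset Finset.subset_union_left (hsub h2 hTA))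
  have hDB : D ≠ B := by
    rintro rfl
    have hsub : A ⊆ D := by
      intro x hx
      by_cases hxT : x ∈ T
      · exact hTB hxT
      · exact hDsub (Finset.mem_sdiff.mpr ⟨hx, hxT⟩)
    exact hAB (Finset.eq_of_subset_of_card_le hsub
      (by simp [hunif A hA, hunif D hD]))
  have hEA : E ≠ A := by
    rintro rfl
    have hsub : B ⊆ E := by
      intro x hx
      by_cases hxT : x ∈ T
      · exact hTA hxT
      · exact hEsub (Finset.mem_sdiff.mpr ⟨hx, hxT⟩)
    exact hAB (Finset.eq_of_subset_of_card_le hsub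
      (by simp [hunif B hB, hunif E hE])).symm
  by_cases hDE : D = E
  · subst hDE
    obtain ⟨X, hXF, hX⟩ : ∃ X ∈ F, X ∉ ({A, B, D} : Finset (Finset ℕ)) := by
      by_contra h
      push_neg at h
      have hsub : F ⊆ ({A, B, D} : Finset (Finset ℕ)) := h
      have h1 := Finset.card_le_card hsub
      have h2 : ({A, B, D} : Finset (Finset ℕ)).card ≤ 3 := by
        calc ({A, B, D} : Finset (Finset ℕ)).card
            ≤ ({B, D} : Finset (Finset ℕ)).card + 1 := Finset.card_insert_le _ _
          _ ≤ (({D} : Finset (Finset ℕ)).card + 1) + 1 := by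
              have := Finset.card_insert_le B ({D} : Finset (Finset ℕ)); omega
          _ ≤ 3 := by simp
      omega
    simp only [Finset.mem_insert, Finset.mem_singleton, not_or] at hX
    obtain ⟨hXA, hXB, hXD⟩ := hX
    exact hAB (hc D X A B hD hXF hA hB (Ne.symm hXD) hDA hDB hXA hXB
      (hUeq (hDsub.trans Finset.subset_union_left)
            (hEsub.trans Finset.subset_union_left)))
  · exact hAB (hc D E A B hD hE hA hB hDE hDA hDB hEA hEB
      (hUeq (hDsub.trans Finset.subset_union_left)
            (hEsub.trans Finset.subset_union_right)))

lemma four_bound (n : ℕ) (F : Finset (Finset ℕ))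
    (hF : ∀ A ∈ F, A ⊆ Finset.range n ∧ A.card = 4)
    (hc : TwoCancellative F) :
    (F.card : ℝ) ≤ (n : ℝ) * ((n : ℝ) - 1) / 6 := by
  have hunif : ∀ A ∈ F, A.card = 4 := fun A hA => (hF A hA).2
  by_cases hsmall : F.card ≤ 3
  · -- small families
    rcases Finset.eq_empty_or_nonempty F with rfl | ⟨A, hA⟩
    · have hnn : (0:ℝ) ≤ (n : ℝ) * ((n : ℝ) - 1) := by
        rcases Nat.eq_zero_or_pos n with h | h
        · subst h; norm_num
        · have h1 : (1:ℝ) ≤ (n:ℝ) := by exact_mod_cast h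
          nlinarith
      simp only [Finset.card_empty, Nat.cast_zero]
      linarith
    · have hn4 : (4:ℕ) ≤ n := by
        have h1 := Finset.card_le_card (hF A hA).1
        rw [(hF A hA).2, Finset.card_range] at h1
        exact h1
      by_cases h2 : F.card ≤ 2
      · have hc2 : (F.card : ℝ) ≤ 2 := by exact_mod_cast h2
        have h4r : (4:ℝ) ≤ (n:ℝ) := by exact_mod_cast hn4
        nlinarith
      · have h3 : F.card = 3 := by omega
        obtain ⟨A1, hA1, B1, hB1, hAB⟩ := Finset.one_lt_card.mp (by omega : 1 < F.card)
        have hcap : (A1 ∩ B1).card ≤ 3 := by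
          by_contra hcon
          push_neg at hcon
          have hle : A1 ∩ B1 ⊆ A1 := Finset.inter_subset_left
          have hcA : A1.card = 4 := hunif A1 hA1
          have heq : A1 ∩ B1 = A1 :=
            Finset.eq_of_subset_of_card_le hle (by omega)
          have hsub : A1 ⊆ B1 := by rw [← heq]; exact Finset.inter_subset_right
          exact hAB (Finset.eq_of_subset_of_card_le hsub
            (by rw [hunif A1 hA1, hunif B1 hB1]))
        have hcup : 5 ≤ (A1 ∪ B1).card := by
          have := Finset.card_union_add_card_inter A1 B1
          have h1 := hunif A1 hA1
          have h2 := hunif B1 hB1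
          omega
        have hn5 : (5:ℕ) ≤ n := by
          have h1 := Finset.card_le_card
            (Finset.union_subset (hF A1 hA1).1 (hF B1 hB1).1)
          rw [Finset.card_range] at h1
          omega
        have h5r : (5:ℝ) ≤ (n:ℝ) := by exact_mod_cast hn5
        have hcr : (F.card : ℝ) = 3 := by rw [h3]; norm_num
        nlinarith
  · have h4 : 4 ≤ F.card := by omega
    set P2 := Finset.powersetCard 2 (Finset.range n) with hP2
    set mm : Finset ℕ → ℕ := fun T => (F.filter (fun A => T ⊆ A)).card with hmm
    -- at most one member of the star at T has a shared link
    have hbad : ∀ T : Finset ℕ,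
        ((F.filter (fun A => T ⊆ A)).filter
          (fun A => 2 ≤ (F.filter (fun D => A \ T ⊆ D)).card)).card ≤ 1 := by
      intro T
      rw [Finset.card_le_one]
      intro a ha b hb
      by_contra hab
      simp only [Finset.mem_filter] at ha hb
      obtain ⟨⟨haF, hTa⟩, hsa⟩ := ha
      obtain ⟨⟨hbF, hTb⟩, hsb⟩ := hb
      have hsa' : 1 < (F.filter (fun D => a \ T ⊆ D)).card := by omega
      have hsb' : 1 < (F.filter (fun D => b \ T ⊆ D)).card := by omega
      obtain ⟨D, hDm, hDa⟩ := Finset.exists_mem_ne hsa' a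
      obtain ⟨E, hEm, hEb⟩ := Finset.exists_mem_ne hsb' b
      simp only [Finset.mem_filter] at hDm hEm
      exact lemma_star h4 hunif hc haF hbF hab hTa hTb hDm.1 hDa hDm.2 hEm.1 hEb hEm.2
    set priv : Finset ℕ → Finset (Finset ℕ) := fun T =>
      ((F.filter (fun A => T ⊆ A)).filter
        (fun A => ¬ 2 ≤ (F.filter (fun D => A \ T ⊆ D)).card)).image (fun A => A \ T)
      with hpriv
    have hprivcard : ∀ T, mm T ≤ (priv T).card + 1 := by
      intro T
      have hsplit := Finset.card_filter_add_card_filter_not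
        (s := F.filter (fun A => T ⊆ A))
        (p := fun A => 2 ≤ (F.filter (fun D => A \ T ⊆ D)).card)
      have himg : (priv T).card
          = ((F.filter (fun A => T ⊆ A)).filter
              (fun A => ¬ 2 ≤ (F.filter (fun D => A \ T ⊆ D)).card)).card := by
        apply Finset.card_image_of_injOn
        intro a ha b hb heq
        simp only [Finset.coe_filter, Set.mem_setOf_eq, Finset.mem_filter] at ha hb
        have hTa : T ⊆ a := ha.1.2
        have hTb : T ⊆ b := hb.1.2
        calc a = T ∪ a \ T := (Finset.union_sdiff_of_subset hTa).symm
          _ = T ∪ b \ T := by rw [show a \ T = b \ T from heq]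
          _ = b := Finset.union_sdiff_of_subset hTb
      have hb := hbad T
      have hmmT : mm T = (F.filter (fun A => T ⊆ A)).card := rfl
      rw [hmmT, himg]
      omega
    set S1 := P2.filter (fun T => mm T = 1) with hS1
    set Heavy := P2.filter (fun T => 3 ≤ mm T) with hHeavy
    have hprivS1 : ∀ T ∈ P2, priv T ⊆ S1 := by
      intro T hT e he
      simp only [hpriv, Finset.mem_image, Finset.mem_filter] at he
      obtain ⟨A, ⟨⟨hAF, hTA⟩, hns⟩, rfl⟩ := he
      have hTcard : T.card = 2 := (Finset.mem_powersetCard.mp hT).2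
      have hsub : A \ T ⊆ Finset.range n := Finset.sdiff_subset.trans (hF A hAF).1
      have hcA : (A \ T).card = 2 := by
        rw [Finset.card_sdiff_of_subset hTA, hunif A hAF, hTcard]
      have hmemA : A ∈ F.filter (fun D => A \ T ⊆ D) :=
        Finset.mem_filter.mpr ⟨hAF, Finset.sdiff_subset⟩
      have h1 : 1 ≤ (F.filter (fun D => A \ T ⊆ D)).card :=
        Finset.card_pos.mpr ⟨A, hmemA⟩
      refine Finset.mem_filter.mpr ⟨Finset.mem_powersetCard.mpr ⟨hsub, hcA⟩, ?_⟩
      have hmmT : mm (A \ T) = (F.filter (fun D => A \ T ⊆ D)).card := rfl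
      rw [hmmT]
      omega
    have hdisj : ∀ T ∈ Heavy, ∀ T' ∈ Heavy, T ≠ T' → Disjoint (priv T) (priv T') := by
      intro T _ T' _ hne
      rw [Finset.disjoint_left]
      intro e he he'
      simp only [hpriv, Finset.mem_image, Finset.mem_filter] at he he'
      obtain ⟨A, ⟨⟨hAF, hTA⟩, hnsA⟩, rfl⟩ := he
      obtain ⟨A', ⟨⟨hA'F, hTA'⟩, hnsA'⟩, heq⟩ := he'
      -- heq : A' \ T' = A \ T
      have hmemA : A ∈ F.filter (fun D => A \ T ⊆ D) :=
        Finset.mem_filter.mpr ⟨hAF, Finset.sdiff_subset⟩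
      have hmemA' : A' ∈ F.filter (fun D => A \ T ⊆ D) :=
        Finset.mem_filter.mpr ⟨hA'F, by rw [← heq]; exact Finset.sdiff_subset⟩
      have hle1 : (F.filter (fun D => A \ T ⊆ D)).card ≤ 1 := by omega
      have hAA' : A = A' := Finset.card_le_one.mp hle1 _ hmemA _ hmemA'
      apply hne
      calc T = A \ (A \ T) := (Finset.sdiff_sdiff_eq_self hTA).symm
        _ = A' \ (A' \ T') := by rw [← heq, hAA']
        _ = T' := Finset.sdiff_sdiff_eq_self hTA'
    have hheavy : ∑ T ∈ Heavy, (mm T - 2) ≤ S1.card := by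
      calc ∑ T ∈ Heavy, (mm T - 2) ≤ ∑ T ∈ Heavy, (priv T).card :=
            Finset.sum_le_sum (fun T _ => by have := hprivcard T; omega)
        _ = (Heavy.biUnion priv).card := (Finset.card_biUnion hdisj).symm
        _ ≤ S1.card := Finset.card_le_card (Finset.biUnion_subset.mpr
            (fun T hT => hprivS1 T (Finset.mem_filter.mp hT).1))
    have hsum_le : ∑ T ∈ P2, mm T ≤ P2.card * 2 := by
      have e1 : ∑ T ∈ P2, mm T
          = ∑ T ∈ P2, min (mm T) 2 + ∑ T ∈ P2, (mm T - 2) := by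
        rw [← Finset.sum_add_distrib]
        exact Finset.sum_congr rfl (fun T _ => by omega)
      have e2 : ∑ T ∈ P2, (mm T - 2) = ∑ T ∈ Heavy, (mm T - 2) := by
        refine (Finset.sum_subset (Finset.filter_subset _ _) ?_).symm
        intro T hT hTn
        have hle : ¬ 3 ≤ mm T := fun h => hTn (Finset.mem_filter.mpr ⟨hT, h⟩)
        omega
      have e3 : ∑ T ∈ P2, min (mm T) 2 + S1.card ≤ P2.card * 2 := by
        have hS1' : S1.card = ∑ T ∈ P2, (if mm T = 1 then 1 else 0) := by
          rw [hS1, Finset.card_filter]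
        rw [hS1', ← Finset.sum_add_distrib]
        calc ∑ T ∈ P2, (min (mm T) 2 + if mm T = 1 then 1 else 0)
            ≤ ∑ _T ∈ P2, 2 := Finset.sum_le_sum (fun T _ => by split <;> omega)
          _ = P2.card * 2 := by rw [Finset.sum_const, smul_eq_mul]
      omega
    have hdouble : ∑ T ∈ P2, mm T = F.card * 6 := by
      calc ∑ T ∈ P2, mm T
          = ∑ T ∈ P2, ∑ A ∈ F, (if T ⊆ A then 1 else 0) :=
            Finset.sum_congr rfl (fun T _ => by rw [hmm]; exact Finset.card_filter _ _)
        _ = ∑ A ∈ F, ∑ T ∈ P2, (if T ⊆ A then 1 else 0) := Finset.sum_comm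
        _ = ∑ A ∈ F, (P2.filter (fun T => T ⊆ A)).card :=
            Finset.sum_congr rfl (fun A _ => (Finset.card_filter _ _).symm)
        _ = ∑ _A ∈ F, 6 := by
            refine Finset.sum_congr rfl (fun A hA => ?_)
            have heq : P2.filter (fun T => T ⊆ A) = Finset.powersetCard 2 A := by
              ext T
              simp only [hP2, Finset.mem_filter, Finset.mem_powersetCard]
              constructor
              · rintro ⟨⟨_, h2⟩, h3⟩; exact ⟨h3, h2⟩
              · rintro ⟨h3, h2⟩; exact ⟨⟨h3.trans (hF A hA).1, h2⟩, h3⟩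
            rw [heq, Finset.card_powersetCard, hunif A hA]
            decide
        _ = F.card * 6 := by rw [Finset.sum_const, smul_eq_mul]
    have hfinal : F.card * 6 ≤ n.choose 2 * 2 := by
      have hP2card : P2.card = n.choose 2 := by
        rw [hP2, Finset.card_powersetCard, Finset.card_range]
      rw [← hdouble, ← hP2card]
      exact hsum_le
    have hR : (F.card : ℝ) * 6 ≤ (n.choose 2 : ℝ) * 2 := by exact_mod_cast hfinal
    rw [Nat.cast_choose_two] at hR
    linarith

lemma three_bound (n : ℕ) (F : Finset (Finset ℕ))
    (hF : ∀ A ∈ F, A ⊆ Finset.range n ∧ A.card = 3)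
    (hc : TwoCancellative F) :
    (F.card : ℝ) ≤ (n : ℝ) * ((n : ℝ) + 1) / 6 := by
  have hnot : ∀ A ∈ F, n ∉ A := by
    intro A hA h
    have := (hF A hA).1 h
    simp at this
  set f : Finset ℕ → Finset ℕ := fun A => insert n A with hf
  have hinj : ∀ A ∈ F, ∀ B ∈ F, f A = f B → A = B := by
    intro A hA B hB h
    have : (insert n A).erase n = (insert n B).erase n := by rw [show insert n A = insert n B from h]
    rwa [Finset.erase_insert (hnot A hA), Finset.erase_insert (hnot B hB)] at this
  set F' : Finset (Finset ℕ) := F.image f with hF'def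
  have hcard : F'.card = F.card := Finset.card_image_of_injOn hinj
  have hF' : ∀ A' ∈ F', A' ⊆ Finset.range (n + 1) ∧ A'.card = 4 := by
    intro A' hA'
    obtain ⟨A, hA, rfl⟩ := Finset.mem_image.mp hA'
    constructor
    · apply Finset.insert_subset (by simp)
      exact (hF A hA).1.trans (Finset.range_subset_range.mpr (Nat.le_succ n))
    · rw [show f A = insert n A from rfl, Finset.card_insert_of_notMem (hnot A hA), (hF A hA).2]
  have hins : ∀ X Y Z : Finset ℕ,
      insert n X ∪ insert n Y ∪ insert n Z = insert n (X ∪ Y ∪ Z) := by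
    intro X Y Z
    ext x
    simp only [Finset.mem_union, Finset.mem_insert]
    tauto
  have hc' : TwoCancellative F' := by
    intro A1' A2' B' C' h1 h2 h3 h4 d12 d1B d1C d2B d2C hU
    obtain ⟨A1, hA1, rfl⟩ := Finset.mem_image.mp h1
    obtain ⟨A2, hA2, rfl⟩ := Finset.mem_image.mp h2
    obtain ⟨B, hB, rfl⟩ := Finset.mem_image.mp h3
    obtain ⟨C, hC, rfl⟩ := Finset.mem_image.mp h4
    have hUn : A1 ∪ A2 ∪ B = A1 ∪ A2 ∪ C := by
      have h' : insert n (A1 ∪ A2 ∪ B) = insert n (A1 ∪ A2 ∪ C) := by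
        rw [← hins, ← hins]; exact hU
      have hnB : n ∉ A1 ∪ A2 ∪ B := by
        simp only [Finset.mem_union, not_or]
        exact ⟨⟨hnot A1 hA1, hnot A2 hA2⟩, hnot B hB⟩
      have hnC : n ∉ A1 ∪ A2 ∪ C := by
        simp only [Finset.mem_union, not_or]
        exact ⟨⟨hnot A1 hA1, hnot A2 hA2⟩, hnot C hC⟩
      rw [← Finset.erase_insert hnB, ← Finset.erase_insert hnC, h']
    have hB_C : B = C := by
      apply hc A1 A2 B C hA1 hA2 hB hC
      · exact fun h => d12 (by rw [h])
      · exact fun h => d1B (by rw [h])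
      · exact fun h => d1C (by rw [h])
      · exact fun h => d2B (by rw [h])
      · exact fun h => d2C (by rw [h])
      · exact hUn
    rw [hB_C]
  have := four_bound (n + 1) F' hF' hc'
  rw [hcard] at this
  have hcast : ((n + 1 : ℕ) : ℝ) = (n : ℝ) + 1 := by push_cast; ring
  rw [hcast] at this
  have : (F.card : ℝ) ≤ ((n : ℝ) + 1) * ((n : ℝ) + 1 - 1) / 6 := this
  nlinarith [this]

lemma cUnifMax2_le {n r : ℕ} {b : ℝ}
    (hb : ∀ F : Finset (Finset ℕ),
      (∀ A ∈ F, A ⊆ Finset.range n ∧ A.card = r) → TwoCancellative F →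
      (F.card : ℝ) ≤ b) :
    (cUnifMax2 n r : ℝ) ≤ b := by
  have hne : Set.Nonempty {m | ∃ F : Finset (Finset ℕ),
      (∀ A ∈ F, A ⊆ Finset.range n ∧ A.card = r) ∧ TwoCancellative F ∧ F.card = m} := by
    refine ⟨0, ∅, ?_, ?_, rfl⟩
    · intro A hA; exact absurd hA (Finset.notMem_empty _)
    · intro A1 A2 B C h1 _ _ _ _ _ _ _ _ _
      exact absurd h1 (Finset.notMem_empty _)
  have hbdd : BddAbove {m | ∃ F : Finset (Finset ℕ),
      (∀ A ∈ F, A ⊆ Finset.range n ∧ A.card = r) ∧ TwoCancellative F ∧ F.card = m} := by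
    refine ⟨(Finset.range n).powerset.card, ?_⟩
    rintro m ⟨F, hF, -, rfl⟩
    exact Finset.card_le_card (fun A hA => Finset.mem_powerset.mpr (hF A hA).1)
  obtain ⟨F, hF, hc, hcard⟩ := Nat.sSup_mem hne hbdd
  rw [cUnifMax2, ← hcard]
  exact hb F hF hc

/-- `c_3(n,2) ≤ n(n+1)/6` and `c_4(n,2) ≤ n(n-1)/6`. -/
theorem c3_c4_upper_bounds (n : ℕ) :
    (cUnifMax2 n 3 : ℝ) ≤ (n : ℝ) * ((n : ℝ) + 1) / 6 ∧
    (cUnifMax2 n 4 : ℝ) ≤ (n : ℝ) * ((n : ℝ) - 1) / 6 := by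
  constructor
  · exact cUnifMax2_le (fun F hF hc => three_bound n F hF hc)
  · exact cUnifMax2_le (fun F hF hc => four_bound n F hF hc)
end
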